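/- arXiv:0911.1090 — 9 statements merged into one kernel-verified Lean document; each statement's English description precedes it below -/
import Mathlib

section
/- Let (ν_k)_{k≥1} be a strictly increasing sequence of positive reals tending to infinity, and let (N_k)_{k≥1} be reals with N_k ≥ 1 for every k. Suppose the weight set is not too dense: there exist constants L ≥ 0 and K ≥ 0 such that for every natural number n ≥ 0, the number of indices k with ν_k < n is at most L·n^K. Then limsup_{k→∞} (ln N_k)/ν_k = limsup_{k→∞} (ln(Σ_{l=1}^k N_l))/ν_k. -/
open Filter Real

private lemma aux_log_div_tendsto :
    Filter.Tendsto (fun x : ℝ => Real.log (x + 1) / x) Filter.atTop (nhds 0) := by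
  have h1 : Filter.Tendsto (fun x : ℝ => Real.log (x + 1) / (x + 1)) Filter.atTop (nhds 0) := by
    have := Real.tendsto_pow_log_div_mul_add_atTop 1 0 1 one_ne_zero
    simp only [pow_one, one_mul, add_zero] at this
    exact this.comp (tendsto_atTop_add_const_right _ 1 tendsto_id)
  have h2 : Filter.Tendsto (fun x : ℝ => (x + 1) / x) Filter.atTop (nhds 1) := by
    have h3 : Filter.Tendsto (fun x : ℝ => 1 + x⁻¹) Filter.atTop (nhds (1 + 0)) :=
      tendsto_const_nhds.add tendsto_inv_atTop_zero
    rw [add_zero] at h3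
    refine h3.congr' ?_
    filter_upwards [Filter.eventually_gt_atTop 0] with x hx
    field_simp
  have := h1.mul h2
  rw [zero_mul] at this
  refine this.congr' ?_
  filter_upwards [Filter.eventually_gt_atTop 0] with x hx
  field_simp

/-- **Theorem 1 (ii).** If the strictly increasing sequence of positive weights
`ν k → ∞` is "not too dense" — i.e. there are constants `L, K ≥ 0` such that for
every natural `n` the number of indices `k` with `ν k < n` is at most `L·n^K`
(with 0-based indexing, `ν k < n` implies `k + 1 ≤ L·n^K`) — then Shannon's
conventional capacity `limsup ln (N k) / ν k` coincides with the generalized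
capacity `limsup ln (∑_{l ≤ k} N l) / ν k`. -/
theorem conventional_capacity_eq_generalized_capacity
    (ν N : ℕ → ℝ)
    (hν_mono : StrictMono ν)
    (hν_pos : ∀ k, 0 < ν k)
    (hν_top : Filter.Tendsto ν Filter.atTop Filter.atTop)
    (hN : ∀ k, 1 ≤ N k)
    (L K : ℝ) (hL : 0 ≤ L) (hK : 0 ≤ K)
    (h_not_too_dense : ∀ n : ℕ, ∀ k : ℕ, ν k < (n : ℝ) →
      ((k : ℝ) + 1) ≤ L * (n : ℝ) ^ K) :
    Filter.limsup
        (fun k : ℕ => ((Real.log (N k) / ν k : ℝ) : EReal)) Filter.atTop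
      = Filter.limsup
          (fun k : ℕ =>
            ((Real.log (∑ l ∈ Finset.range (k + 1), N l) / ν k : ℝ) : EReal))
          Filter.atTop := by
  set S : ℕ → ℝ := fun k => ∑ l ∈ Finset.range (k + 1), N l with hSdef
  have hNpos : ∀ k, (0 : ℝ) < N k := fun k => lt_of_lt_of_le one_pos (hN k)
  have hSpos : ∀ k, (0 : ℝ) < S k := by
    intro k
    exact Finset.sum_pos (fun i _ => hNpos i) ⟨k, Finset.self_mem_range_succ k⟩
  have hNS : ∀ k, N k ≤ S k := by
    intro k
    exact Finset.single_le_sum (fun i _ => (hNpos i).le) (Finset.self_mem_range_succ k)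
  have hle : ∀ k, ((Real.log (N k) / ν k : ℝ) : EReal)
      ≤ ((Real.log (S k) / ν k : ℝ) : EReal) := by
    intro k
    apply EReal.coe_le_coe_iff.2
    gcongr
    exacts [(hν_pos k).le, hNpos k, hNS k]
  apply le_antisymm
  · exact Filter.limsup_le_limsup (Filter.Eventually.of_forall hle)
  · -- hard direction
    set C := Filter.limsup
        (fun k : ℕ => ((Real.log (N k) / ν k : ℝ) : EReal)) Filter.atTop with hCdef
    have hC0 : (0 : EReal) ≤ C := by
      apply Filter.le_limsup_of_frequently_le'
      apply Filter.Frequently.of_forall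
      intro k
      have : (0:ℝ) ≤ Real.log (N k) / ν k :=
        div_nonneg (Real.log_nonneg (hN k)) (hν_pos k).le
      exact_mod_cast this
    rcases eq_or_ne C ⊤ with hCtop | hCtop
    · rw [hCtop]; exact le_top
    · have hCbot : C ≠ ⊥ := ne_bot_of_le_ne_bot (by simp) hC0
      set c : ℝ := C.toReal with hcdef
      have hCc : C = (c : EReal) := (EReal.coe_toReal hCtop hCbot).symm
      have hc0 : 0 ≤ c := by
        rw [hCc] at hC0; exact_mod_cast hC0
      -- key claim
      have key : ∀ ε : ℝ, 0 < ε → Filter.limsup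
          (fun k : ℕ => ((Real.log (S k) / ν k : ℝ) : EReal)) Filter.atTop
          ≤ ((c + ε : ℝ) : EReal) := by
        intro ε hε
        set ε' : ℝ := ε / 2 with hε'def
        have hε' : 0 < ε' := by positivity
        have hce' : 0 ≤ c + ε' := by linarith
        have hlt : C < ((c + ε' : ℝ) : EReal) := by
          rw [hCc]; exact_mod_cast (lt_add_of_pos_right c hε')
        obtain ⟨k0, hk0⟩ := Filter.eventually_atTop.1 (Filter.eventually_lt_of_limsup_lt hlt)
        have hk0' : ∀ l, k0 ≤ l → Real.log (N l) ≤ (c + ε') * ν l := by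
          intro l hl
          have h1 : Real.log (N l) / ν l < c + ε' := by exact_mod_cast hk0 l hl
          have h2 := mul_le_mul_of_nonneg_right h1.le (hν_pos l).le
          rwa [div_mul_cancel₀ _ (hν_pos l).ne'] at h2
        set B : ℝ := ∑ l ∈ Finset.range k0, N l with hBdef
        have hB0 : 0 ≤ B := Finset.sum_nonneg fun i _ => (hNpos i).le
        have hLpos : 0 < L := by
          obtain ⟨n, hn⟩ : ∃ n : ℕ, ν 0 < (n : ℝ) := exists_nat_gt (ν 0)
          have h1 := h_not_too_dense n 0 hn
          rcases hL.lt_or_eq with h | h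
          · exact h
          · rw [← h, zero_mul] at h1; norm_num at h1
        have hkb : ∀ k : ℕ, Real.log ((k : ℝ) + 1) ≤ Real.log L + K * Real.log (ν k + 1) := by
          intro k
          set n : ℕ := ⌊ν k⌋₊ + 1 with hndef
          have hn1 : ν k < (n : ℝ) := by
            rw [hndef]; push_cast
            exact Nat.lt_floor_add_one (ν k)
          have h1 := h_not_too_dense n k hn1
          have hn2 : (n : ℝ) ≤ ν k + 1 := by
            rw [hndef]; push_cast
            have := Nat.floor_le (hν_pos k).le
            linarith
          have h2 : (n : ℝ) ^ K ≤ (ν k + 1) ^ K :=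
            Real.rpow_le_rpow (by positivity) hn2 hK
          have h3 : (k : ℝ) + 1 ≤ L * (ν k + 1) ^ K :=
            h1.trans (mul_le_mul_of_nonneg_left h2 hL)
          have hνk1 : (0:ℝ) < ν k + 1 := by linarith [hν_pos k]
          calc Real.log ((k:ℝ) + 1) ≤ Real.log (L * (ν k + 1) ^ K) :=
                Real.log_le_log (by positivity) h3
            _ = Real.log L + K * Real.log (ν k + 1) := by
                rw [Real.log_mul (ne_of_gt hLpos) (by positivity), Real.log_rpow hνk1]
        have htend : Filter.Tendsto
            (fun k : ℕ => (Real.log (B + 1) + Real.log L + K * Real.log (ν k + 1)) / ν k)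
            Filter.atTop (nhds 0) := by
          have t1 : Filter.Tendsto (fun k : ℕ => (ν k)⁻¹) Filter.atTop (nhds 0) :=
            tendsto_inv_atTop_zero.comp hν_top
          have t2 : Filter.Tendsto (fun k : ℕ => Real.log (ν k + 1) / ν k)
              Filter.atTop (nhds 0) := aux_log_div_tendsto.comp hν_top
          have t3 := ((tendsto_const_nhds (x := Real.log (B+1) + Real.log L)
            (f := Filter.atTop (α := ℕ))).mul t1).add
            ((tendsto_const_nhds (x := K) (f := Filter.atTop (α := ℕ))).mul t2)
          simp only [mul_zero, add_zero] at t3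
          refine t3.congr fun k => ?_
          have := (hν_pos k).ne'
          field_simp
        have hsmall : ∀ᶠ k in Filter.atTop,
            (Real.log (B + 1) + Real.log L + K * Real.log (ν k + 1)) / ν k < ε' :=
          htend.eventually_lt_const hε'
        have hmain : ∀ᶠ k in Filter.atTop,
            ((Real.log (S k) / ν k : ℝ) : EReal) ≤ ((c + ε : ℝ) : EReal) := by
          filter_upwards [hsmall, Filter.eventually_ge_atTop k0] with k hks hkk0
          apply EReal.coe_le_coe_iff.2
          set E : ℝ := Real.exp ((c + ε') * ν k) with hEdef
          have hE1 : 1 ≤ E := Real.one_le_exp (mul_nonneg hce' (hν_pos k).le)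
          have hSsplit : S k = B + ∑ l ∈ Finset.Ico k0 (k+1), N l := by
            rw [hSdef, hBdef]
            simp only
            rw [Finset.range_eq_Ico, Finset.range_eq_Ico]
            exact (Finset.sum_Ico_consecutive N (Nat.zero_le k0) (show k0 ≤ k + 1 by omega)).symm
          have hterm : ∀ l ∈ Finset.Ico k0 (k+1), N l ≤ E := by
            intro l hl
            obtain ⟨hl1, hl2⟩ := Finset.mem_Ico.1 hl
            have h1 : Real.log (N l) ≤ (c + ε') * ν l := hk0' l hl1
            have h2 : ν l ≤ ν k := hν_mono.monotone (by omega)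
            have h3 : (c + ε') * ν l ≤ (c + ε') * ν k :=
              mul_le_mul_of_nonneg_left h2 hce'
            calc N l = Real.exp (Real.log (N l)) := (Real.exp_log (hNpos l)).symm
              _ ≤ E := Real.exp_le_exp.2 (h1.trans h3)
          have hsum : ∑ l ∈ Finset.Ico k0 (k+1), N l ≤ ((k:ℝ)+1) * E := by
            calc ∑ l ∈ Finset.Ico k0 (k+1), N l ≤ (Finset.Ico k0 (k+1)).card • E :=
                  Finset.sum_le_card_nsmul _ _ _ hterm
              _ = ((k+1-k0 : ℕ) : ℝ) * E := by rw [Nat.card_Ico, nsmul_eq_mul]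
              _ ≤ ((k:ℝ)+1) * E := by
                  apply mul_le_mul_of_nonneg_right _ (le_trans zero_le_one hE1)
                  have : (k+1-k0 : ℕ) ≤ k+1 := by omega
                  exact_mod_cast this
          have hSb : S k ≤ (B + (k:ℝ) + 1) * E := by
            rw [hSsplit]
            have : B ≤ B * E := le_mul_of_one_le_right hB0 hE1
            nlinarith [hsum]
          have hlogS : Real.log (S k) ≤ Real.log (B + (k:ℝ) + 1) + (c+ε') * ν k := by
            calc Real.log (S k) ≤ Real.log ((B + (k:ℝ)+1) * E) :=
                  Real.log_le_log (hSpos k) hSb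
              _ = Real.log (B + (k:ℝ)+1) + (c+ε')*ν k := by
                  rw [Real.log_mul (by positivity) (by positivity), hEdef, Real.log_exp]
          have hnum : Real.log (B + (k:ℝ) + 1) ≤ Real.log (B+1) + Real.log ((k:ℝ)+1) := by
            rw [← Real.log_mul (by positivity) (by positivity)]
            apply Real.log_le_log (by positivity)
            nlinarith [hB0]
          have hnum2 : Real.log (B + (k:ℝ)+1)
              ≤ Real.log (B+1) + Real.log L + K * Real.log (ν k + 1) := by
            linarith [hkb k]
          have hd : Real.log (B + (k:ℝ)+1) / ν k < ε' := by
            refine lt_of_le_of_lt ?_ hks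
            gcongr
            exact (hν_pos k).le
          calc Real.log (S k) / ν k
              ≤ (Real.log (B + (k:ℝ)+1) + (c+ε') * ν k) / ν k := by
                gcongr
                exact (hν_pos k).le
            _ = Real.log (B + (k:ℝ)+1) / ν k + (c+ε') := by
                rw [add_div, mul_div_cancel_right₀ _ (hν_pos k).ne']
            _ ≤ c + ε := by
                rw [hε'def] at hd ⊢; linarith
        exact Filter.limsup_le_of_le (by isBoundedDefault) hmain
      by_contra hcon
      push_neg at hcon
      rw [hCc] at hcon
      obtain ⟨x, hx1, hx2⟩ := EReal.lt_iff_exists_real_btwn.1 hcon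
      have hxc : c < x := by exact_mod_cast hx1
      have := key (x - c) (by linarith)
      rw [show c + (x - c) = x by ring] at this
      exact absurd hx2 (not_lt.2 this)
end

section
/- Let Z be a countable set with a weight function w : Z → ℝ_{>0}, and let R > 0 be a real number such that Σ_{z∈Z} e^{-w(z)·R} = 1 (in particular the family (e^{-w(z)R})_{z∈Z} is summable). Then for every probability mass function p on Z (p(z) ≥ 0, Σ_{z∈Z} p(z) = 1) with finite expected weight E_p[w] = Σ_z p(z)·w(z) < ∞, the entropy H(p) = -Σ_{z∈Z} p(z) ln p(z) satisfies H(p) ≤ R · E_p[w]. -/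
/-- **Lemma 1 (upper bound).** Let `Z` be a countable set with positive weight
function `w`, and let `R > 0` satisfy `∑_{z ∈ Z} e^{-w z · R} = 1`. Then every
probability mass function `p` on `Z` with finite expected weight
`E_p[w] = ∑ p z · w z < ∞` has entropy `H(p) = -∑ p z · ln (p z)` (in nats,
with `0 · ln 0 = 0`) satisfying `H(p) ≤ R · E_p[w]`; in particular the entropy
series is summable. -/
theorem entropy_le_R_mul_expected_weight
    (Z : Type*) [Countable Z]
    (w : Z → ℝ) (hw : ∀ z, 0 < w z)
    (R : ℝ) (hR : 0 < R)
    (hq_summable : Summable fun z => Real.exp (-(w z) * R))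
    (hq_sum_one : ∑' z, Real.exp (-(w z) * R) = 1)
    (p : Z → ℝ) (hp_nonneg : ∀ z, 0 ≤ p z)
    (hp_summable : Summable p)
    (hp_sum_one : ∑' z, p z = 1)
    (hEw_summable : Summable fun z => p z * w z) :
    (Summable fun z => -(p z * Real.log (p z))) ∧
      (∑' z, -(p z * Real.log (p z))) ≤ R * ∑' z, p z * w z := by
  set q : Z → ℝ := fun z => Real.exp (-(w z) * R) with hq_def
  -- each p z ≤ 1
  have hp_le_one : ∀ z, p z ≤ 1 := by
    intro z
    rw [← hp_sum_one]
    exact Summable.le_tsum hp_summable z (fun b _ => hp_nonneg b)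
  -- entropy terms are nonnegative
  have h_nonneg : ∀ z, 0 ≤ -(p z * Real.log (p z)) := by
    intro z
    have : p z * Real.log (p z) ≤ 0 :=
      mul_nonpos_of_nonneg_of_nonpos (hp_nonneg z)
        (Real.log_nonpos (hp_nonneg z) (hp_le_one z))
    linarith
  -- pointwise bound
  have h_ptwise : ∀ z, -(p z * Real.log (p z)) ≤ q z - p z + R * (p z * w z) := by
    intro z
    rcases eq_or_lt_of_le (hp_nonneg z) with h0 | hpos
    · rw [← h0]
      simp only [neg_zero, zero_mul, mul_zero, Real.log_zero, sub_zero, add_zero]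
      positivity
    · have hq_pos : 0 < q z := Real.exp_pos _
      have hlog : Real.log (q z / p z) ≤ q z / p z - 1 :=
        Real.log_le_sub_one_of_pos (div_pos hq_pos hpos)
      have hmul : p z * Real.log (q z / p z) ≤ p z * (q z / p z - 1) :=
        mul_le_mul_of_nonneg_left hlog (hp_nonneg z)
      have h1 : p z * (q z / p z - 1) = q z - p z := by
        field_simp
      have h2 : Real.log (q z / p z) = (-(w z) * R) - Real.log (p z) := by
        rw [Real.log_div (ne_of_gt hq_pos) (ne_of_gt hpos), hq_def, Real.log_exp]
      rw [h2, h1] at hmul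
      nlinarith [hmul]
  -- summability of the majorant
  have h_maj : Summable fun z => q z - p z + R * (p z * w z) :=
    (hq_summable.sub hp_summable).add (hEw_summable.mul_left R)
  have h_summ : Summable fun z => -(p z * Real.log (p z)) :=
    Summable.of_nonneg_of_le h_nonneg h_ptwise h_maj
  refine ⟨h_summ, ?_⟩
  calc (∑' z, -(p z * Real.log (p z)))
      ≤ ∑' z, (q z - p z + R * (p z * w z)) := Summable.tsum_le_tsum h_ptwise h_summ h_maj
    _ = (∑' z, q z) - (∑' z, p z) + R * ∑' z, p z * w z := by
        rw [Summable.tsum_add (hq_summable.sub hp_summable) (hEw_summable.mul_left R),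
          Summable.tsum_sub hq_summable hp_summable, tsum_mul_left]
    _ = R * ∑' z, p z * w z := by rw [hq_sum_one, hp_sum_one]; ring
end

section
/- Let Z be a countable set with a weight function w : Z → ℝ_{>0}, and let R > 0 be a real number such that Σ_{z∈Z} e^{-w(z)·R} = 1. If p is a probability mass function on Z with finite expected weight E_p[w] = Σ_z p(z)·w(z) < ∞ whose entropy satisfies H(p) = R · E_p[w], then p(z) = e^{-w(z)·R} for all z ∈ Z. -/
/-- **Lemma 1 (uniqueness).** Let `Z` be a countable set with positive weight
function `w`, and let `R > 0` satisfy `∑_{z ∈ Z} e^{-w z · R} = 1`. If `p` is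
a probability mass function on `Z` with finite expected weight whose entropy
`H(p) = -∑ p z · ln (p z)` equals `R · E_p[w]`, then `p` is the exponential
distribution: `p z = e^{-w z · R}` for all `z`. -/
theorem maxentropic_pmf_unique
    (Z : Type*) [Countable Z]
    (w : Z → ℝ) (hw : ∀ z, 0 < w z)
    (R : ℝ) (hR : 0 < R)
    (hq_summable : Summable fun z => Real.exp (-(w z) * R))
    (hq_sum_one : ∑' z, Real.exp (-(w z) * R) = 1)
    (p : Z → ℝ) (hp_nonneg : ∀ z, 0 ≤ p z)
    (hp_summable : Summable p)
    (hp_sum_one : ∑' z, p z = 1)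
    (hEw_summable : Summable fun z => p z * w z)
    (h_entropy : (∑' z, -(p z * Real.log (p z))) = R * ∑' z, p z * w z) :
    ∀ z, p z = Real.exp (-(w z) * R) := by
  set q : Z → ℝ := fun z => Real.exp (-(w z) * R) with hq_def
  have hq_pos : ∀ z, 0 < q z := fun z => Real.exp_pos _
  have hlogq : ∀ z, Real.log (q z) = -(w z) * R := fun z => Real.log_exp _
  -- p z ≤ 1
  have hp_le_one : ∀ z, p z ≤ 1 := by
    intro z
    rw [← hp_sum_one]
    exact Summable.le_tsum hp_summable z (fun j _ => hp_nonneg j)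
  -- entropy terms are nonnegative
  have hent_nonneg : ∀ z, 0 ≤ -(p z * Real.log (p z)) := by
    intro z
    have : p z * Real.log (p z) ≤ 0 :=
      mul_nonpos_of_nonneg_of_nonpos (hp_nonneg z)
        (Real.log_nonpos (hp_nonneg z) (hp_le_one z))
    linarith
  -- expected weight terms nonnegative
  have hEw_nonneg : ∀ z, 0 ≤ p z * w z := fun z =>
    mul_nonneg (hp_nonneg z) (hw z).le
  -- the entropy series is summable
  have hent_summable : Summable fun z => -(p z * Real.log (p z)) := by
    by_contra hns
    have h0 : (∑' z, -(p z * Real.log (p z))) = 0 := tsum_eq_zero_of_not_summable hns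
    have hE0 : (∑' z, p z * w z) = 0 := by
      have := h_entropy
      rw [h0] at this
      exact (mul_eq_zero.mp this.symm).resolve_left (ne_of_gt hR)
    have hzero : ∀ z, p z = 0 := by
      intro z
      have hle : p z * w z ≤ 0 := by
        rw [← hE0]
        exact Summable.le_tsum hEw_summable z (fun j _ => hEw_nonneg j)
      have : p z * w z = 0 := le_antisymm hle (hEw_nonneg z)
      rcases mul_eq_zero.mp this with h | h
      · exact h
      · exact absurd h (ne_of_gt (hw z))
    have : (∑' z, p z) = 0 := by
      simp [funext hzero]
    rw [hp_sum_one] at this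
    exact one_ne_zero this
  -- the cross-entropy series: p z * log (q z) = -R * (p z * w z)
  have hcross_eq : ∀ z, p z * Real.log (q z) = -R * (p z * w z) := by
    intro z
    rw [hlogq z]; ring
  have hcross_summable : Summable fun z => p z * Real.log (q z) := by
    apply Summable.congr (hEw_summable.mul_left (-R))
    intro z
    exact (hcross_eq z).symm
  have hcross_sum : (∑' z, p z * Real.log (q z)) = -R * ∑' z, p z * w z := by
    rw [tsum_congr hcross_eq, tsum_mul_left]
  -- plogp summable
  have hplogp_summable : Summable fun z => p z * Real.log (p z) := by
    have := hent_summable.neg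
    simpa using this
  have hplogp_sum : (∑' z, p z * Real.log (p z)) = -∑' z, -(p z * Real.log (p z)) := by
    rw [← tsum_neg]; simp
  -- define f
  set f : Z → ℝ := fun z => (q z - p z) + (p z * Real.log (p z) - p z * Real.log (q z))
    with hf_def
  have hf_nonneg : ∀ z, 0 ≤ f z := by
    intro z
    rcases eq_or_lt_of_le (hp_nonneg z) with h0 | hpos
    · simp [hf_def, ← h0, (hq_pos z).le]
    · have hdiv : 0 < q z / p z := div_pos (hq_pos z) hpos
      have hlog : Real.log (q z / p z) ≤ q z / p z - 1 := Real.log_le_sub_one_of_pos hdiv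
      have hmul : p z * Real.log (q z / p z) ≤ p z * (q z / p z - 1) :=
        mul_le_mul_of_nonneg_left hlog hpos.le
      rw [Real.log_div (ne_of_gt (hq_pos z)) (ne_of_gt hpos)] at hmul
      have hrhs : p z * (q z / p z - 1) = q z - p z := by
        field_simp
      rw [hrhs] at hmul
      simp only [hf_def]
      nlinarith [hmul]
  have hf_summable : Summable f := by
    apply Summable.add (hq_summable.sub hp_summable)
    exact hplogp_summable.sub hcross_summable
  have hf_sum : (∑' z, f z) = 0 := by
    have h1 : (∑' z, f z) =
        (∑' z, (q z - p z)) + ∑' z, (p z * Real.log (p z) - p z * Real.log (q z)) :=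
      Summable.tsum_add (hq_summable.sub hp_summable) (hplogp_summable.sub hcross_summable)
    have h2 : (∑' z, (q z - p z)) = 0 := by
      rw [Summable.tsum_sub hq_summable hp_summable, hq_sum_one, hp_sum_one]; ring
    have h3 : (∑' z, (p z * Real.log (p z) - p z * Real.log (q z))) = 0 := by
      rw [Summable.tsum_sub hplogp_summable hcross_summable, hplogp_sum, hcross_sum, h_entropy]
      ring
    rw [h1, h2, h3]; ring
  -- conclude each f z = 0
  have hf_zero : ∀ z, f z = 0 := by
    intro z
    have hle : f z ≤ 0 := by
      rw [← hf_sum]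
      exact Summable.le_tsum hf_summable z (fun j _ => hf_nonneg j)
    exact le_antisymm hle (hf_nonneg z)
  -- conclude p = q
  intro z
  by_contra hne
  rcases eq_or_lt_of_le (hp_nonneg z) with h0 | hpos
  · have := hf_zero z
    simp [hf_def, ← h0] at this
    exact (ne_of_gt (hq_pos z)) this
  · have hdiv : 0 < q z / p z := div_pos (hq_pos z) hpos
    have hne1 : q z / p z ≠ 1 := by
      intro h
      apply hne
      field_simp at h
      exact h.symm
    have hlog : Real.log (q z / p z) < q z / p z - 1 :=
      Real.log_lt_sub_one_of_pos hdiv hne1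
    have hmul : p z * Real.log (q z / p z) < p z * (q z / p z - 1) :=
      (mul_lt_mul_iff_right₀ hpos).mpr hlog
    rw [Real.log_div (ne_of_gt (hq_pos z)) (ne_of_gt hpos)] at hmul
    have hrhs : p z * (q z / p z - 1) = q z - p z := by field_simp
    rw [hrhs] at hmul
    have := hf_zero z
    simp only [hf_def] at this
    nlinarith [hmul]
end

section
/- Let 𝒜 be a countable set with a weight function w : 𝒜 → ℝ_{>0}. Let (𝒳_l)_{l≥1} be a sequence of nonempty pairwise disjoint subsets of 𝒜, and for each l let p_l be a probability mass function supported on 𝒳_l with finite expected weight E_{p_l}[w] = Σ_{x∈𝒳_l} p_l(x)·w(x) < ∞. Suppose for each l there is R_l > 0 with Σ_{x∈𝒳_l} e^{-w(x)·R_l} = 1. Then limsup_{l→∞} H(p_l)/E_{p_l}[w] ≤ limsup_{l→∞} R_l, where H(p_l) = -Σ_{x∈𝒳_l} p_l(x) ln p_l(x). -/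
open Real Filter

/-- Gibbs-type pointwise estimate and summation: for a fixed index,
`H(p) ≤ R * E[w]`. -/
private lemma gibbs_aux {A : Type*} (w : A → ℝ) (hw : ∀ a, 0 < w a)
    (s : Set A) (f : A → ℝ)
    (hf_nonneg : ∀ x, 0 ≤ f x)
    (hf_supp : ∀ x, x ∉ s → f x = 0)
    (hf_summable : Summable f)
    (hf_sum_one : ∑' x, f x = 1)
    (hEw_summable : Summable fun x => f x * w x)
    (r : ℝ) (hr : 0 < r)
    (hq_summable : Summable fun x : s => Real.exp (-(w x.1) * r))
    (hq_sum_one : ∑' x : s, Real.exp (-(w x.1) * r) = 1)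
    (hH : Summable fun x => -(f x * Real.log (f x))) :
    (∑' x, -(f x * Real.log (f x))) ≤ r * ∑' x, f x * w x := by
  -- reduce tsums over `A` to tsums over the subtype `s`
  have hsubH : Function.support (fun x => -(f x * Real.log (f x))) ⊆ s := by
    intro x hx
    by_contra hxs
    simp [hf_supp x hxs] at hx
  have hsubE : Function.support (fun x => f x * w x) ⊆ s := by
    intro x hx
    by_contra hxs
    simp [hf_supp x hxs] at hx
  have hsubf : Function.support f ⊆ s := by
    intro x hx
    by_contra hxs
    simp [hf_supp x hxs] at hx
  rw [← tsum_subtype_eq_of_support_subset hsubH, ← tsum_subtype_eq_of_support_subset hsubE]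
  have hfs : ∑' x : s, f x = 1 := by
    rw [tsum_subtype_eq_of_support_subset hsubf, hf_sum_one]
  -- pointwise Gibbs inequality
  have key : ∀ x : s, -(f x.1 * Real.log (f x.1)) - r * (f x.1 * w x.1)
      ≤ Real.exp (-(w x.1) * r) - f x.1 := by
    intro x
    rcases eq_or_lt_of_le (hf_nonneg x.1) with h0 | h0
    · simp [← h0, (Real.exp_pos _).le]
    · have hq : (0:ℝ) < Real.exp (-(w x.1) * r) := Real.exp_pos _
      have ht : (0:ℝ) < Real.exp (-(w x.1) * r) / f x.1 := div_pos hq h0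
      have hlog := Real.log_le_sub_one_of_pos ht
      have h2 : f x.1 * Real.log (Real.exp (-(w x.1) * r) / f x.1)
          ≤ f x.1 * (Real.exp (-(w x.1) * r) / f x.1 - 1) :=
        mul_le_mul_of_nonneg_left hlog (hf_nonneg x.1)
      rw [Real.log_div (ne_of_gt hq) (ne_of_gt h0), Real.log_exp] at h2
      have h3 : f x.1 * (Real.exp (-(w x.1) * r) / f x.1 - 1)
          = Real.exp (-(w x.1) * r) - f x.1 := by
        field_simp
      rw [h3] at h2
      nlinarith [h2]
  have hsumH : Summable fun x : s => -(f x.1 * Real.log (f x.1)) := hH.subtype s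
  have hsumE : Summable fun x : s => f x.1 * w x.1 := hEw_summable.subtype s
  have hsum1 : Summable fun x : s => -(f x.1 * Real.log (f x.1)) - r * (f x.1 * w x.1) :=
    hsumH.sub (hsumE.mul_left r)
  have hfsub : Summable fun x : s => f x.1 := hf_summable.subtype s
  have hsum2 : Summable fun x : s => Real.exp (-(w x.1) * r) - f x.1 :=
    hq_summable.sub hfsub
  have hle := Summable.tsum_le_tsum key hsum1 hsum2
  rw [Summable.tsum_sub hsumH (hsumE.mul_left r), Summable.tsum_sub hq_summable hfsub,
    hq_sum_one, hfs, tsum_mul_left] at hle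
  linarith

/-- **Lemma 2.** Let `(𝒜, w)` be a constrained system (a countable set with a
positive weight function) and let `(𝒳 l)` be a sequence of nonempty pairwise
disjoint subsets of `𝒜`. For each `l`, let `p l` be a probability mass
function supported on `𝒳 l` with finite expected weight, and let `R l > 0`
solve `∑_{x ∈ 𝒳 l} e^{-w x · R l} = 1`. Then the entropy rate of the input
source is bounded by the rate bound:
`limsup_l H(p l) / E_{p l}[w] ≤ limsup_l R l`. -/
theorem entropy_rate_le_rate_bound
    (A : Type*) [Countable A]
    (w : A → ℝ) (hw : ∀ a, 0 < w a)
    (𝒳 : ℕ → Set A)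
    (h_nonempty : ∀ l, (𝒳 l).Nonempty)
    (h_disjoint : ∀ l l', l ≠ l' → Disjoint (𝒳 l) (𝒳 l'))
    (p : ℕ → A → ℝ)
    (hp_nonneg : ∀ l x, 0 ≤ p l x)
    (hp_supp : ∀ l x, x ∉ 𝒳 l → p l x = 0)
    (hp_summable : ∀ l, Summable (p l))
    (hp_sum_one : ∀ l, ∑' x, p l x = 1)
    (hEw_summable : ∀ l, Summable fun x => p l x * w x)
    (R : ℕ → ℝ) (hR_pos : ∀ l, 0 < R l)
    (hR_summable : ∀ l, Summable fun x : 𝒳 l => Real.exp (-(w x.1) * R l))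
    (hR_sum_one : ∀ l, ∑' x : 𝒳 l, Real.exp (-(w x.1) * R l) = 1) :
    Filter.limsup
        (fun l : ℕ =>
          (((∑' x, -(p l x * Real.log (p l x))) / ∑' x, p l x * w x : ℝ) : EReal))
        Filter.atTop
      ≤ Filter.limsup (fun l : ℕ => ((R l : ℝ) : EReal)) Filter.atTop := by
  refine Filter.limsup_le_limsup (Filter.Eventually.of_forall fun l => ?_)
  rw [EReal.coe_le_coe_iff]
  -- E[w] > 0
  have hE_pos : 0 < ∑' x, p l x * w x := by
    have hne : ∃ x, p l x ≠ 0 := by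
      by_contra h
      push_neg at h
      have : ∑' x, p l x = 0 := by simp [h]
      rw [hp_sum_one l] at this; norm_num at this
    obtain ⟨x, hx⟩ := hne
    have hx' : 0 < p l x * w x :=
      mul_pos (lt_of_le_of_ne (hp_nonneg l x) (Ne.symm hx)) (hw x)
    exact Summable.tsum_pos (hEw_summable l) (fun i => mul_nonneg (hp_nonneg l i) (hw i).le) x hx'
  by_cases hH : Summable fun x => -(p l x * Real.log (p l x))
  · rw [div_le_iff₀ hE_pos]
    exact gibbs_aux w hw (𝒳 l) (p l) (hp_nonneg l) (hp_supp l) (hp_summable l)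
      (hp_sum_one l) (hEw_summable l) (R l) (hR_pos l) (hR_summable l) (hR_sum_one l) hH
  · rw [tsum_eq_zero_of_not_summable hH]
    rw [zero_div]
    exact (hR_pos l).le
end

section
/- Let 𝒜 be a countable set with a weight function w : 𝒜 → ℝ_{>0}. Let (𝒳_l)_{l≥1} be a sequence of nonempty pairwise disjoint subsets of 𝒜, and suppose for each l there is R_l > 0 with Σ_{x∈𝒳_l} e^{-w(x)·R_l} = 1. Let Q = inf{σ ∈ ℝ : Σ_{a∈𝒜} e^{-w(a)σ} converges}. Then limsup_{l→∞} R_l ≤ Q. Equivalently, for every real σ < limsup_l R_l, the family (e^{-w(a)σ})_{a∈𝒜} is not summable. -/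
/-- **Lemma 3.** Let `(𝒜, w)` be a constrained system (a countable set with a
positive weight function) and let `(𝒳 l)` be a sequence of nonempty pairwise
disjoint subsets of `𝒜`, with `R l > 0` solving
`∑_{x ∈ 𝒳 l} e^{-w x · R l} = 1` for each `l`. Then the rate bound
`limsup_l R l` is at most the abscissa of convergence
`Q = inf {σ : ∑_{a ∈ 𝒜} e^{-w a · σ} converges}` of the generating function
(with `Q = ⊤` if the series converges for no real `σ`). -/
theorem rate_bound_le_abscissa_of_convergence
    (A : Type*) [Countable A]
    (w : A → ℝ) (hw : ∀ a, 0 < w a)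
    (𝒳 : ℕ → Set A)
    (h_nonempty : ∀ l, (𝒳 l).Nonempty)
    (h_disjoint : ∀ l l', l ≠ l' → Disjoint (𝒳 l) (𝒳 l'))
    (R : ℕ → ℝ) (hR_pos : ∀ l, 0 < R l)
    (hR_summable : ∀ l, Summable fun x : 𝒳 l => Real.exp (-(w x.1) * R l))
    (hR_sum_one : ∀ l, ∑' x : 𝒳 l, Real.exp (-(w x.1) * R l) = 1) :
    Filter.limsup (fun l : ℕ => ((R l : ℝ) : EReal)) Filter.atTop
      ≤ sInf ((fun σ : ℝ => (σ : EReal)) ''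
          {σ : ℝ | Summable fun a : A => Real.exp (-(w a) * σ)}) := by
  apply le_sInf
  rintro y ⟨σ, hσ, rfl⟩
  -- it suffices to show R l ≤ σ eventually
  -- the sigma-type map into A is injective by disjointness
  have hinj : Function.Injective (fun p : Σ l, 𝒳 l => (p.2 : A)) := by
    rintro ⟨l, x, hx⟩ ⟨l', x', hx'⟩ h
    simp only at h
    subst h
    have : l = l' := by
      by_contra hne
      exact (h_disjoint l l' hne).ne_of_mem hx hx' rfl
    subst this
    rfl
  have hsig : Summable fun p : Σ l, 𝒳 l => Real.exp (-(w p.2.1) * σ) := by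
    have := hσ.comp_injective hinj
    exact this
  have hsum : Summable fun l => ∑' x : 𝒳 l, Real.exp (-(w x.1) * σ) :=
    hsig.sigma
  have htend : Filter.Tendsto (fun l => ∑' x : 𝒳 l, Real.exp (-(w x.1) * σ))
      Filter.atTop (nhds 0) := hsum.tendsto_atTop_zero
  have hev : ∀ᶠ l in Filter.atTop,
      (∑' x : 𝒳 l, Real.exp (-(w x.1) * σ)) < 1 :=
    htend.eventually (gt_mem_nhds (by norm_num))
  have hev' : ∀ᶠ l in Filter.atTop, ((R l : ℝ) : EReal) ≤ (σ : EReal) := by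
    filter_upwards [hev] with l hl
    rw [EReal.coe_le_coe_iff]
    by_contra hc
    push_neg at hc
    have hle : (1 : ℝ) ≤ ∑' x : 𝒳 l, Real.exp (-(w x.1) * σ) := by
      rw [← hR_sum_one l]
      apply Summable.tsum_le_tsum _ (hR_summable l) (hσ.subtype (𝒳 l))
      intro x
      apply Real.exp_le_exp.2
      have := (hw x.1)
      nlinarith [hc.le]
    linarith
  exact Filter.limsup_le_of_le (by isBoundedDefault) hev'
end

section
/- Let 𝒜 be a countable set with a weight function w : 𝒜 → ℝ_{>0}, and let Q = inf{σ ∈ ℝ : Σ_{a∈𝒜} e^{-w(a)σ} converges}. Let (𝒳_l)_{l≥1} be nonempty pairwise disjoint subsets of 𝒜 such that for each l there is R_l > 0 with Σ_{x∈𝒳_l} e^{-w(x)·R_l} = 1, and for each l let p_l be a probability mass function supported on 𝒳_l with finite expected weight. Then the entropy rate satisfies limsup_{l→∞} H(p_l)/E_{p_l}[w] ≤ Q, where H(p_l) = -Σ_{x∈𝒳_l} p_l(x) ln p_l(x) and E_{p_l}[w] = Σ_{x∈𝒳_l} p_l(x) w(x). -/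
lemma gibbs_pt (p q : ℝ) (hp : 0 ≤ p) (hq : 0 < q) :
    -(p * Real.log p) ≤ -(p * Real.log q) + (q - p) := by
  rcases eq_or_lt_of_le hp with h | h
  · simp [← h]; positivity
  · have h1 : Real.log (q / p) ≤ q / p - 1 := Real.log_le_sub_one_of_pos (by positivity)
    have h2 : p * Real.log (q / p) ≤ q - p := by
      have := mul_le_mul_of_nonneg_left h1 hp
      calc p * Real.log (q / p) ≤ p * (q / p - 1) := this
        _ = q - p := by field_simp
    have h3 : Real.log (q / p) = Real.log q - Real.log p := Real.log_div hq.ne' h.ne'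
    nlinarith [h2, h3]

lemma entropy_le_rate (A : Type*) (w : A → ℝ) (X : Set A)
    (r : ℝ)
    (hqs : Summable fun x : X => Real.exp (-(w x.1) * r))
    (hq1 : ∑' x : X, Real.exp (-(w x.1) * r) = 1)
    (p : A → ℝ) (hp0 : ∀ x, 0 ≤ p x) (hps : ∀ x, x ∉ X → p x = 0)
    (hpsum : Summable p) (hp1 : ∑' x, p x = 1)
    (hE : Summable fun x => p x * w x) :
    ∑' x, -(p x * Real.log (p x)) ≤ r * ∑' x, p x * w x := by
  set q : A → ℝ := X.indicator (fun a => Real.exp (-(w a) * r)) with hqdef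
  have hqsum : Summable q := (summable_subtype_iff_indicator.mp hqs)
  have hqtsum : ∑' a, q a = 1 := by
    rw [← hq1, hqdef, ← tsum_subtype X (fun a => Real.exp (-(w a) * r))]
  set g : A → ℝ := fun a => p a * w a * r + (q a - p a) with hgdef
  have hgsum : Summable g := (hE.mul_right r).add (hqsum.sub hpsum)
  have hle : ∀ a, -(p a * Real.log (p a)) ≤ g a := by
    intro a
    by_cases hx : a ∈ X
    · have hq : q a = Real.exp (-(w a) * r) := Set.indicator_of_mem hx _
      have := gibbs_pt (p a) (q a) (hp0 a) (by rw [hq]; positivity)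
      have hlog : Real.log (q a) = -(w a) * r := by rw [hq, Real.log_exp]
      rw [hlog] at this
      simp only [hgdef]
      nlinarith [this]
    · have hpa : p a = 0 := hps a hx
      have hq : q a = 0 := Set.indicator_of_notMem hx _
      simp [hgdef, hpa, hq]
  have hnn : ∀ a, 0 ≤ -(p a * Real.log (p a)) := by
    intro a
    have hle1 : p a ≤ 1 := by
      rw [← hp1]; exact Summable.le_tsum hpsum a (fun b _ => hp0 b)
    rcases eq_or_lt_of_le (hp0 a) with h | h
    · simp [← h]
    · have : Real.log (p a) ≤ 0 := Real.log_nonpos (hp0 a) hle1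
      nlinarith
  have hfsum : Summable fun a => -(p a * Real.log (p a)) :=
    Summable.of_nonneg_of_le hnn hle hgsum
  calc ∑' x, -(p x * Real.log (p x)) ≤ ∑' x, g x := Summable.tsum_le_tsum hle hfsum hgsum
    _ = (∑' x, p x * w x) * r + (∑' a, q a - ∑' a, p a) := by
        rw [hgdef, Summable.tsum_add (hE.mul_right r) (hqsum.sub hpsum),
          Summable.tsum_sub hqsum hpsum, tsum_mul_right]
    _ = r * ∑' x, p x * w x := by rw [hqtsum, hp1]; ring

/-- **Lemmas 1–3 combined.** The entropy rate of any input source of a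
constrained system `(𝒜, w)` — given by nonempty pairwise disjoint supports
`𝒳 l ⊆ 𝒜` carrying probability mass functions `p l` with finite expected
weight, where `R l > 0` solves `∑_{x ∈ 𝒳 l} e^{-w x · R l} = 1` — is
upper-bounded by the abscissa of convergence
`Q = inf {σ : ∑_{a ∈ 𝒜} e^{-w a · σ} converges}` of the generating function
(with `Q = ⊤` if the series converges for no real `σ`). -/
theorem entropy_rate_le_abscissa_of_convergence
    (A : Type*) [Countable A]
    (w : A → ℝ) (hw : ∀ a, 0 < w a)
    (𝒳 : ℕ → Set A)
    (h_nonempty : ∀ l, (𝒳 l).Nonempty)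
    (h_disjoint : ∀ l l', l ≠ l' → Disjoint (𝒳 l) (𝒳 l'))
    (R : ℕ → ℝ) (hR_pos : ∀ l, 0 < R l)
    (hR_summable : ∀ l, Summable fun x : 𝒳 l => Real.exp (-(w x.1) * R l))
    (hR_sum_one : ∀ l, ∑' x : 𝒳 l, Real.exp (-(w x.1) * R l) = 1)
    (p : ℕ → A → ℝ)
    (hp_nonneg : ∀ l x, 0 ≤ p l x)
    (hp_supp : ∀ l x, x ∉ 𝒳 l → p l x = 0)
    (hp_summable : ∀ l, Summable (p l))
    (hp_sum_one : ∀ l, ∑' x, p l x = 1)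
    (hEw_summable : ∀ l, Summable fun x => p l x * w x) :
    Filter.limsup
        (fun l : ℕ =>
          (((∑' x, -(p l x * Real.log (p l x))) / ∑' x, p l x * w x : ℝ) : EReal))
        Filter.atTop
      ≤ sInf ((fun σ : ℝ => (σ : EReal)) ''
          {σ : ℝ | Summable fun a : A => Real.exp (-(w a) * σ)}) := by
  apply le_sInf
  rintro b ⟨σ, hσ, rfl⟩
  -- Expected weight is positive
  have hEpos : ∀ l, 0 < ∑' x, p l x * w x := by
    intro l
    have hne : ∃ x, p l x ≠ 0 := by
      by_contra h
      push_neg at h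
      have := hp_sum_one l
      simp [h] at this
    obtain ⟨x, hx⟩ := hne
    have hx' : 0 < p l x * w x := mul_pos (lt_of_le_of_ne (hp_nonneg l x) (Ne.symm hx)) (hw x)
    exact lt_of_lt_of_le hx'
      (Summable.le_tsum (hEw_summable l) x (fun y _ => mul_nonneg (hp_nonneg l y) (hw y).le))
  -- H / E ≤ R l for each l
  have hHE : ∀ l, (∑' x, -(p l x * Real.log (p l x))) / (∑' x, p l x * w x) ≤ R l := by
    intro l
    rw [div_le_iff₀ (hEpos l)]
    have := entropy_le_rate A w (𝒳 l) (R l) (hR_summable l) (hR_sum_one l) (p l)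
      (hp_nonneg l) (hp_supp l) (hp_summable l) (hp_sum_one l) (hEw_summable l)
    linarith
  -- summability over the disjoint union
  have hinj : Function.Injective (fun lx : Σ l : ℕ, 𝒳 l => lx.2.1) := by
    rintro ⟨l, x, hx⟩ ⟨l', y, hy⟩ h
    simp only at h
    subst h
    have hll : l = l' := by
      by_contra hne
      exact (h_disjoint l l' hne).ne_of_mem hx hy rfl
    subst hll
    rfl
  have hsig : Summable fun lx : Σ l : ℕ, 𝒳 l => Real.exp (-(w lx.2.1) * σ) :=
    hσ.comp_injective hinj
  have hSsum : Summable fun l => ∑' x : 𝒳 l, Real.exp (-(w x.1) * σ) := hsig.sigma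
  have hS0 : Filter.Tendsto (fun l => ∑' x : 𝒳 l, Real.exp (-(w x.1) * σ))
      Filter.atTop (nhds 0) := hSsum.tendsto_atTop_zero
  have hev : ∀ᶠ l in Filter.atTop, ∑' x : 𝒳 l, Real.exp (-(w x.1) * σ) < 1 :=
    hS0.eventually_lt_const one_pos
  -- eventually R l ≤ σ
  have hRσ : ∀ᶠ l in Filter.atTop, R l ≤ σ := by
    filter_upwards [hev] with l hl
    by_contra hc
    push_neg at hc
    have hle : ∀ x : 𝒳 l, Real.exp (-(w x.1) * R l) ≤ Real.exp (-(w x.1) * σ) := by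
      intro x
      apply Real.exp_le_exp.mpr
      have := hw x.1
      nlinarith
    have : (1 : ℝ) ≤ ∑' x : 𝒳 l, Real.exp (-(w x.1) * σ) := by
      rw [← hR_sum_one l]
      exact Summable.tsum_le_tsum hle (hR_summable l) (hσ.comp_injective Subtype.val_injective)
    linarith
  -- conclude
  apply Filter.limsup_le_of_le (by isBoundedDefault)
  filter_upwards [hRσ] with l hl
  exact EReal.coe_le_coe_iff.mpr (le_trans (hHE l) hl)
end

section
/- Let Σ₀ be a countable alphabet with a letter-weight function w₀ : Σ₀ → ℝ_{>0}, extended additively to strings by w(y₁⋯y_m) = w₀(y₁) + ⋯ + w₀(y_m). Let 𝒜 be a set of nonempty strings over Σ₀ and Q = inf{σ ∈ ℝ : Σ_{a∈𝒜} e^{-w(a)σ} converges}. Let 𝒴 be a countable set of nonempty strings over Σ₀, and for each l ≥ 1 let p_l be a probability mass function on 𝒴^l (the distribution of the first l steps of an input process) with finite expected total weight. Suppose: (a) the concatenation map cat(y₁,…,y_l) = y₁y₂⋯y_l is injective on the support of p_l for each l; (b) the images under cat of the supports of the p_l are nonempty, pairwise disjoint across distinct l, and all contained in 𝒜; and (c)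 for each l there exists R_l > 0 with Σ e^{-w(x)R_l} = 1, summing over x in the image of the support of p_l under cat. Then limsup_{l→∞} H(p_l)/E_{p_l}[w(Y₁)+⋯+w(Y_l)] ≤ Q, where H(p_l) is the entropy (in nats) of p_l. -/
open Filter Set

lemma aux_w_flatten {α : Type*} (w₀ : α → ℝ) (w : List α → ℝ)
    (hw : ∀ s : List α, w s = (s.map w₀).sum) {n : ℕ} (y : Fin n → List α) :
    w ((List.ofFn y).flatten) = ∑ i, w (y i) := by
  simp [hw, List.map_flatten, List.sum_flatten, List.map_ofFn, List.sum_ofFn, Function.comp]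

/-- Gibbs-type per-level bound. -/
lemma aux_key {T : Type*} (p : T → ℝ) (W : T → ℝ) (Rl : ℝ)
    (hp_nonneg : ∀ y, 0 ≤ p y) (hp_summable : Summable p)
    (hp_sum_one : ∑' y, p y = 1)
    (hEw : Summable fun y => p y * W y)
    (q : T → ℝ)
    (hq_summable : Summable q) (hq_sum : ∑' y, q y = 1)
    (hq0 : ∀ y, p y = 0 → q y = 0)
    (hq : ∀ y, p y ≠ 0 → q y = Real.exp (-(W y) * Rl)) :
    (∑' y, -(p y * Real.log (p y))) ≤ (∑' y, p y * W y) * Rl := by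
  set f : T → ℝ := fun y => -(p y * Real.log (p y)) with hf
  set g : T → ℝ := fun y => (q y - p y) + (p y * W y) * Rl with hg
  have hple1 : ∀ y, p y ≤ 1 := by
    intro y
    have := Summable.le_tsum hp_summable y (fun _ _ => hp_nonneg _)
    rwa [hp_sum_one] at this
  have hf_nonneg : ∀ y, 0 ≤ f y := by
    intro y
    have : p y * Real.log (p y) ≤ 0 :=
      mul_nonpos_iff.2 (Or.inl ⟨hp_nonneg y, Real.log_nonpos (hp_nonneg y) (hple1 y)⟩)
    simpa [hf] using this
  have hfg : ∀ y, f y ≤ g y := by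
    intro y
    by_cases hy : p y = 0
    · simp [hf, hg, hy, hq0 y hy]
    · have hppos : 0 < p y := lt_of_le_of_ne (hp_nonneg y) (Ne.symm hy)
      have hqy := hq y hy
      have hqpos : 0 < q y := by rw [hqy]; exact Real.exp_pos _
      have h1 : Real.log (q y / p y) ≤ q y / p y - 1 :=
        Real.log_le_sub_one_of_pos (by positivity)
      have h2 : p y * Real.log (q y / p y) ≤ q y - p y := by
        have := mul_le_mul_of_nonneg_left h1 hppos.le
        calc p y * Real.log (q y / p y) ≤ p y * (q y / p y - 1) := this
          _ = q y - p y := by field_simp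
      have h3 : Real.log (q y / p y) = -(W y) * Rl - Real.log (p y) := by
        rw [Real.log_div hqpos.ne' hy, hqy, Real.log_exp]
      rw [h3, mul_sub] at h2
      simp only [hf, hg]
      nlinarith
  have hg_summable : Summable g :=
    (hq_summable.sub hp_summable).add (hEw.mul_right Rl)
  have hf_summable : Summable f := by
    apply summable_of_sum_le (c := ∑' y, |g y|) hf_nonneg
    intro u
    calc ∑ y ∈ u, f y ≤ ∑ y ∈ u, |g y| :=
          Finset.sum_le_sum (fun y _ => (hfg y).trans (le_abs_self _))
      _ ≤ ∑' y, |g y| := Summable.sum_le_tsum u (fun _ _ => abs_nonneg _) hg_summable.abs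
  calc ∑' y, f y ≤ ∑' y, g y := Summable.tsum_le_tsum hfg hf_summable hg_summable
    _ = ((∑' y, q y) - ∑' y, p y) + (∑' y, p y * W y) * Rl := by
        rw [Summable.tsum_add (hq_summable.sub hp_summable) (hEw.mul_right Rl),
          Summable.tsum_sub hq_summable hp_summable, tsum_mul_right]
    _ = (∑' y, p y * W y) * Rl := by rw [hq_sum, hp_sum_one]; ring


lemma aux_eventually {β : Type*} (A : Set β) (wt : β → ℝ)
    (hwt : ∀ a, 0 ≤ wt a)
    (img : ℕ → Set β) (hsub : ∀ l, img l ⊆ A)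
    (hdis : ∀ l l', l ≠ l' → Disjoint (img l) (img l'))
    (R : ℕ → ℝ)
    (hRsummable : ∀ l, Summable fun x : img l => Real.exp (-(wt x.1) * R l))
    (hRsum : ∀ l, ∑' x : img l, Real.exp (-(wt x.1) * R l) = 1)
    (σ : ℝ) (hσ : Summable fun a : A => Real.exp (-(wt a.1) * σ)) :
    ∀ᶠ l in Filter.atTop, R l ≤ σ := by
  by_contra hcon
  rw [Filter.not_eventually] at hcon
  have hinf : {l : ℕ | ¬ R l ≤ σ}.Infinite :=
    Nat.frequently_atTop_iff_infinite.1 hcon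
  set C : ℝ := ∑' a : A, Real.exp (-(wt a.1) * σ) with hC
  obtain ⟨T, hTsub, hTcard⟩ := hinf.exists_subset_card_eq (⌈C⌉₊ + 1)
  -- summability over each image
  have hgs : Summable (Set.indicator A (fun a => Real.exp (-(wt a) * σ))) :=
    summable_subtype_iff_indicator.1 hσ
  have himg_summable : ∀ l, Summable
      (fun x : img l => Real.exp (-(wt x.1) * σ)) := by
    intro l
    have hle : Summable (Set.indicator (img l) (fun a => Real.exp (-(wt a) * σ))) := by
      apply Summable.of_nonneg_of_le _ _ hgs
      · exact fun a => Set.indicator_nonneg (fun x _ => (Real.exp_pos _).le) a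
      · exact fun a => Set.indicator_le_indicator_of_subset (hsub l)
          (fun x => (Real.exp_pos _).le) a
    exact summable_subtype_iff_indicator.2 hle
  -- each image with `σ < R l` contributes at least 1
  have hone : ∀ l, σ < R l →
      1 ≤ ∑' x : img l, Real.exp (-(wt x.1) * σ) := by
    intro l hl
    rw [← hRsum l]
    apply Summable.tsum_le_tsum _ (hRsummable l) (himg_summable l)
    intro x
    apply Real.exp_le_exp.2
    have hwx : 0 ≤ wt x.1 := hwt _
    nlinarith
  -- indicator functions
  set ind : ℕ → β → ℝ := fun l =>
    Set.indicator (img l) (fun a => Real.exp (-(wt a) * σ)) with hind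
  have hind_summable : ∀ l, Summable (ind l) := fun l =>
    summable_subtype_iff_indicator.1 (himg_summable l)
  have hind_tsum : ∀ l, ∑' a, ind l a = ∑' x : img l, Real.exp (-(wt x.1) * σ) :=
    fun l => (tsum_subtype (img l) (fun a => Real.exp (-(wt a) * σ))).symm
  set g : β → ℝ := Set.indicator A (fun a => Real.exp (-(wt a) * σ)) with hgdef
  have hg_summable : Summable g := summable_subtype_iff_indicator.1 hσ
  have hg_tsum : ∑' a, g a = C := (tsum_subtype A _).symm
  -- pointwise bound : the sum of the indicators is at most `g`
  have hpt : ∀ a : β, ∑ l ∈ T, ind l a ≤ g a := by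
    intro a
    by_cases ha : ∃ l₀ ∈ T, a ∈ img l₀
    · obtain ⟨l₀, hl₀T, hal₀⟩ := ha
      have hsum : ∑ l ∈ T, ind l a = ind l₀ a := by
        apply Finset.sum_eq_single_of_mem l₀ hl₀T
        intro b hbT hbne
        have : a ∉ img b :=
          fun hab => (hdis b l₀ hbne).le_bot ⟨hab, hal₀⟩
        exact Set.indicator_of_notMem this _
      rw [hsum]
      have h1 : ind l₀ a = Real.exp (-(wt a) * σ) := Set.indicator_of_mem hal₀ _
      have h2 : g a = Real.exp (-(wt a) * σ) :=
        Set.indicator_of_mem (hsub l₀ hal₀) _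
      rw [h1, h2]
    · push_neg at ha
      have : ∀ l ∈ T, ind l a = 0 := fun l hl =>
        Set.indicator_of_notMem (ha l hl) _
      rw [Finset.sum_eq_zero this]
      exact Set.indicator_nonneg (fun x _ => (Real.exp_pos _).le) a
  -- summing up gives a contradiction
  have hhs : Summable (fun a => ∑ l ∈ T, ind l a) :=
    summable_sum (fun l _ => hind_summable l)
  have htsum_eq : ∑' a, ∑ l ∈ T, ind l a = ∑ l ∈ T, ∑' a, ind l a :=
    Summable.tsum_finsetSum (fun l _ => hind_summable l)
  have hlow : (⌈C⌉₊ + 1 : ℝ) ≤ ∑' a, ∑ l ∈ T, ind l a := by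
    rw [htsum_eq]
    have : ∀ l ∈ T, (1 : ℝ) ≤ ∑' a, ind l a := by
      intro l hl
      rw [hind_tsum l]
      exact hone l (lt_of_not_ge (hTsub hl))
    calc (⌈C⌉₊ + 1 : ℝ) = (T.card : ℝ) := by rw [hTcard]; push_cast; ring
      _ = ∑ _l ∈ T, (1 : ℝ) := by simp
      _ ≤ ∑ l ∈ T, ∑' a, ind l a := Finset.sum_le_sum this
  have hup : ∑' a, ∑ l ∈ T, ind l a ≤ C := by
    rw [← hg_tsum]
    exact Summable.tsum_le_tsum hpt hhs hg_summable
  have : (⌈C⌉₊ + 1 : ℝ) ≤ C := hlow.trans hup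
  have hCle : C ≤ (⌈C⌉₊ : ℝ) := Nat.le_ceil C
  linarith

set_option maxHeartbeats 1600000 in
/-- **Theorem 2.** Strings over a countable alphabet `α` are modelled as lists,
with weight `w s = ∑_{c ∈ s} w₀ c` extended additively from a positive letter
weight `w₀`. Let `𝒜` be a set of nonempty strings with abscissa of convergence
`Q = inf {σ : ∑_{a ∈ 𝒜} e^{-w a · σ} converges}` (a value in `EReal`, `⊤` if
the series never converges), and let `𝒴` be a set of nonempty strings. For
each `l ≥ 1` let `p l` be a probability mass function on `𝒴^l` (tuples
`Fin (l+1) → List α`, representing the first `l+1` steps of an input process)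
with finite expected total weight. Suppose (a) concatenation is injective on
the support of each `p l`; (b) the images of the supports under concatenation
are nonempty, pairwise disjoint, and contained in `𝒜`; and (c) for each `l`
there is `R l > 0` with `∑ e^{-w x · R l} = 1` over the image of the support.
Then the entropy rate of the process,
`limsup_l H(p l) / E_{p l}[w(Y₁) + ⋯ + w(Y_l)]`, is at most `Q`. -/
theorem input_process_entropy_rate_le_abscissa
    (α : Type*) [Countable α]
    (w₀ : α → ℝ) (hw₀ : ∀ c, 0 < w₀ c)
    (w : List α → ℝ) (hw : ∀ s : List α, w s = (s.map w₀).sum)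
    (𝒜 : Set (List α)) (h𝒜 : ∀ a ∈ 𝒜, a ≠ [])
    (𝒴 : Set (List α)) (h𝒴 : ∀ y ∈ 𝒴, y ≠ [])
    (p : (l : ℕ) → (Fin (l + 1) → List α) → ℝ)
    (hp_nonneg : ∀ l y, 0 ≤ p l y)
    (hp_supp : ∀ l y, p l y ≠ 0 → ∀ i, y i ∈ 𝒴)
    (hp_summable : ∀ l, Summable (p l))
    (hp_sum_one : ∀ l, ∑' y, p l y = 1)
    (hEw_summable : ∀ l, Summable fun y : Fin (l + 1) → List α =>
      p l y * ∑ i, w (y i))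
    -- (a) concatenation is injective on the support of `p l`
    (h_inj : ∀ l, ∀ y y' : Fin (l + 1) → List α, p l y ≠ 0 → p l y' ≠ 0 →
      (List.ofFn y).flatten = (List.ofFn y').flatten → y = y')
    -- (b) images of the supports under concatenation: nonempty, pairwise
    -- disjoint, contained in `𝒜`
    (h_img_nonempty : ∀ l,
      ((fun y : Fin (l + 1) → List α => (List.ofFn y).flatten) ''
        {y | p l y ≠ 0}).Nonempty)
    (h_img_disjoint : ∀ l l', l ≠ l' →
      Disjoint
        ((fun y : Fin (l + 1) → List α => (List.ofFn y).flatten) ''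
          {y | p l y ≠ 0})
        ((fun y : Fin (l' + 1) → List α => (List.ofFn y).flatten) ''
          {y | p l' y ≠ 0}))
    (h_img_sub : ∀ l,
      ((fun y : Fin (l + 1) → List α => (List.ofFn y).flatten) ''
        {y | p l y ≠ 0}) ⊆ 𝒜)
    -- (c) the rate bounds `R l`
    (R : ℕ → ℝ) (hR_pos : ∀ l, 0 < R l)
    (hR_summable : ∀ l, Summable fun x :
        ((fun y : Fin (l + 1) → List α => (List.ofFn y).flatten) ''
          {y | p l y ≠ 0}) =>
      Real.exp (-(w x.1) * R l))
    (hR_sum_one : ∀ l, (∑' x :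
        ((fun y : Fin (l + 1) → List α => (List.ofFn y).flatten) ''
          {y | p l y ≠ 0}),
      Real.exp (-(w x.1) * R l)) = 1) :
    Filter.limsup
        (fun l : ℕ =>
          (((∑' y, -(p l y * Real.log (p l y))) /
              ∑' y : Fin (l + 1) → List α, p l y * ∑ i, w (y i) : ℝ) : EReal))
        Filter.atTop
      ≤ sInf ((fun σ : ℝ => (σ : EReal)) ''
          {σ : ℝ | Summable fun a : 𝒜 => Real.exp (-(w a.1) * σ)}) := by
  -- basic facts about `w`
  have hw_nonneg : ∀ s : List α, 0 ≤ w s := by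
    intro s
    rw [hw]
    exact List.sum_nonneg
      (by rintro x hx; obtain ⟨c, -, rfl⟩ := List.mem_map.1 hx; exact (hw₀ c).le)
  have hw_pos : ∀ s : List α, s ≠ [] → 0 < w s := by
    rintro (_ | ⟨a, t⟩) hs
    · exact absurd rfl hs
    · have ht : 0 ≤ w t := hw_nonneg t
      rw [hw] at ht ⊢
      simp only [List.map_cons, List.sum_cons]
      nlinarith [hw₀ a]
  -- image sets
  set img : ℕ → Set (List α) := fun l =>
    (fun y : Fin (l + 1) → List α => (List.ofFn y).flatten) '' {y | p l y ≠ 0} with himg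
  -- Step 1 : for each `l`, the ratio is at most `R l`
  have key : ∀ l : ℕ,
      (∑' y, -(p l y * Real.log (p l y))) /
        (∑' y : Fin (l + 1) → List α, p l y * ∑ i, w (y i)) ≤ R l := by
    intro l
    -- the indicator version of the reference distribution
    set q : (Fin (l + 1) → List α) → ℝ :=
      Set.indicator {y | p l y ≠ 0}
        (fun y => Real.exp (-(w ((List.ofFn y).flatten)) * R l)) with hqdef
    -- the equivalence between the support and its image
    have hbij : Function.Bijective
        (fun y : {y // p l y ≠ 0} =>
          (⟨(List.ofFn y.1).flatten, ⟨y.1, y.2, rfl⟩⟩ : img l)) := by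
      constructor
      · rintro ⟨y, hy⟩ ⟨y', hy'⟩ h
        have := h_inj l y y' hy hy' (by simpa using congrArg Subtype.val h)
        exact Subtype.ext this
      · rintro ⟨x, y, hy, rfl⟩
        exact ⟨⟨y, hy⟩, rfl⟩
    set e : {y // p l y ≠ 0} ≃ img l := Equiv.ofBijective _ hbij with he
    have hcomp : (fun x : img l => Real.exp (-(w x.1) * R l)) ∘ e =
        fun y : {y // p l y ≠ 0} =>
          Real.exp (-(w ((List.ofFn y.1).flatten)) * R l) := rfl
    have hq_summable : Summable q := by
      rw [hqdef, ← summable_subtype_iff_indicator]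
      have := (e.summable_iff
        (f := fun x : img l => Real.exp (-(w x.1) * R l))).2 (hR_summable l)
      rw [hcomp] at this
      exact this
    have hq_sum : ∑' y, q y = 1 := by
      rw [hqdef, ← tsum_subtype]
      calc (∑' y : {y | p l y ≠ 0},
              Real.exp (-(w ((List.ofFn y.1).flatten)) * R l))
          = ∑' x : img l, Real.exp (-(w x.1) * R l) :=
            e.tsum_eq (fun x : img l => Real.exp (-(w x.1) * R l))
        _ = 1 := hR_sum_one l
    -- positivity of the expected weight
    have hsupp_ne : ∃ y, p l y ≠ 0 := by
      by_contra h
      push_neg at h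
      have : (∑' y, p l y) = 0 := by simp [h]
      rw [hp_sum_one l] at this
      norm_num at this
    obtain ⟨y₀, hy₀⟩ := hsupp_ne
    have hterm_nonneg : ∀ y : Fin (l + 1) → List α, 0 ≤ p l y * ∑ i, w (y i) :=
      fun y => mul_nonneg (hp_nonneg l y)
        (Finset.sum_nonneg fun i _ => hw_nonneg _)
    have hE_pos : 0 < ∑' y : Fin (l + 1) → List α, p l y * ∑ i, w (y i) := by
      have h1 : 0 < p l y₀ * ∑ i, w (y₀ i) := by
        apply mul_pos (lt_of_le_of_ne (hp_nonneg l y₀) (Ne.symm hy₀))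
        apply Finset.sum_pos (fun i _ => hw_pos _ (h𝒴 _ (hp_supp l y₀ hy₀ i)))
        exact Finset.univ_nonempty
      exact h1.trans_le (Summable.le_tsum (hEw_summable l) y₀ fun y _ => hterm_nonneg y)
    -- Gibbs bound
    have hH : (∑' y, -(p l y * Real.log (p l y))) ≤
        (∑' y : Fin (l + 1) → List α, p l y * ∑ i, w (y i)) * R l := by
      apply aux_key (p l) (fun y => ∑ i, w (y i)) (R l) (hp_nonneg l)
        (hp_summable l) (hp_sum_one l) (hEw_summable l) q hq_summable hq_sum
      · intro y hy
        exact Set.indicator_of_notMem (by simpa using hy) _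
      · intro y hy
        rw [hqdef, Set.indicator_of_mem (by simpa using hy),
          aux_w_flatten w₀ w hw y]
    rw [div_le_iff₀ hE_pos]
    linarith [hH]
  -- Step 2 : for every σ in the convergence set, eventually `R l ≤ σ`
  have hev : ∀ σ : ℝ, (Summable fun a : 𝒜 => Real.exp (-(w a.1) * σ)) →
      ∀ᶠ l in Filter.atTop, R l ≤ σ := fun σ hσ =>
    aux_eventually 𝒜 w hw_nonneg img h_img_sub h_img_disjoint R
      hR_summable hR_sum_one σ hσ
  -- Step 3 : conclude
  refine le_sInf ?_
  rintro x ⟨σ, hσ, rfl⟩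
  refine Filter.limsup_le_of_le (by isBoundedDefault) ?_
  filter_upwards [hev σ hσ] with l hl
  exact EReal.coe_le_coe_iff.2 ((key l).trans hl)
end

section
/- Fix integers j, k ≥ 1 with j·k > 1. For n ≥ 1 let N(n) be the number of binary strings of length n containing no run of more than j consecutive 1s and no run of more than k consecutive 0s. Then limsup_{n→∞} (ln N(n))/n = s*, where s* is the unique positive real solution of (Σ_{a=1}^{j} e^{-a·s})·(Σ_{b=1}^{k} e^{-b·s}) = 1. -/
open List

namespace JKCap


lemma drop_block (a b : ℕ) (rest : List Bool) :
    List.drop (a+b) (replicate a true ++ replicate b false ++ rest) = rest := by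
  have h : replicate a true ++ replicate b false ++ rest
      = (replicate a true ++ replicate b false) ++ rest := by simp [append_assoc]
  rw [h]
  have hlen : (replicate a true ++ replicate b false).length = a + b := by simp
  rw [← hlen, List.drop_left]

/-- Window lemma, true runs. -/
lemma infix_true_elim {j a b : ℕ} {rest : List Bool} (ha : a ≤ j) (hb : 1 ≤ b)
    (h : replicate (j+1) true <:+: replicate a true ++ replicate b false ++ rest) :
    replicate (j+1) true <:+: rest := by
  obtain ⟨u, v, huv⟩ := h
  have hl : u ++ (replicate (j+1) true ++ v)
      = replicate a true ++ (replicate b false ++ rest) := by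
    rw [← append_assoc, huv, append_assoc]
  have hlen := congrArg List.length huv
  simp only [length_append, length_replicate] at hlen
  rcases le_or_gt (a + b) u.length with hge | hlt
  · have h1 := congrArg (List.drop (a+b)) huv
    rw [drop_block] at h1
    rw [append_assoc] at h1
    rw [List.drop_append, Nat.sub_eq_zero_of_le hge, drop_zero] at h1
    exact ⟨u.drop (a+b), v, by rw [append_assoc, h1]⟩
  · exfalso
    rcases lt_or_ge u.length a with hi | hi
    · have hidx : a < (u ++ (replicate (j+1) true ++ v)).length := by
        simp only [length_append, length_replicate]; omega
      have v1 : (u ++ (replicate (j+1) true ++ v))[a]'hidx = true := by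
        rw [List.getElem_append_right (by omega),
          List.getElem_append_left (by simp; omega)]
        exact getElem_replicate _
      have v2 : (u ++ (replicate (j+1) true ++ v))[a]'hidx = false := by
        rw [List.getElem_of_eq hl]
        rw [List.getElem_append_right (by simp),
          List.getElem_append_left (by simp; omega)]
        exact getElem_replicate _
      rw [v1] at v2; exact Bool.noConfusion v2
    · have hidx : u.length < (u ++ (replicate (j+1) true ++ v)).length := by
        simp only [length_append, length_replicate]; omega
      have v1 : (u ++ (replicate (j+1) true ++ v))[u.length]'hidx = true := by
        rw [List.getElem_append_right (le_refl _),
          List.getElem_append_left (by simp)]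
        exact getElem_replicate _
      have v2 : (u ++ (replicate (j+1) true ++ v))[u.length]'hidx = false := by
        rw [List.getElem_of_eq hl]
        rw [List.getElem_append_right (by simp [hi]),
          List.getElem_append_left (by simp; omega)]
        exact getElem_replicate _
      rw [v1] at v2; exact Bool.noConfusion v2

/-- Window lemma, false runs. -/
lemma infix_false_elim {k a b : ℕ} {rest : List Bool} (hb : b ≤ k)
    (hrest : rest = [] ∨ rest.head? = some true)
    (h : replicate (k+1) false <:+: replicate a true ++ replicate b false ++ rest) :
    replicate (k+1) false <:+: rest := by
  obtain ⟨u, v, huv⟩ := h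
  have hl : u ++ (replicate (k+1) false ++ v)
      = replicate a true ++ (replicate b false ++ rest) := by
    rw [← append_assoc, huv, append_assoc]
  have hlen := congrArg List.length huv
  simp only [length_append, length_replicate] at hlen
  rcases le_or_gt (a + b) u.length with hge | hlt
  · have h1 := congrArg (List.drop (a+b)) huv
    rw [drop_block] at h1
    rw [append_assoc] at h1
    rw [List.drop_append, Nat.sub_eq_zero_of_le hge, drop_zero] at h1
    exact ⟨u.drop (a+b), v, by rw [append_assoc, h1]⟩
  · exfalso
    rcases lt_or_ge u.length a with hi | hi
    · have hidx : u.length < (u ++ (replicate (k+1) false ++ v)).length := by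
        simp only [length_append, length_replicate]; omega
      have v1 : (u ++ (replicate (k+1) false ++ v))[u.length]'hidx = false := by
        rw [List.getElem_append_right (le_refl _),
          List.getElem_append_left (by simp)]
        exact getElem_replicate _
      have v2 : (u ++ (replicate (k+1) false ++ v))[u.length]'hidx = true := by
        rw [List.getElem_of_eq hl]
        rw [List.getElem_append_left (by simpa using hi)]
        exact getElem_replicate _
      rw [v2] at v1; exact Bool.noConfusion v1
    · have hidx : a + b < (u ++ (replicate (k+1) false ++ v)).length := by
        simp only [length_append, length_replicate]; omega
      have v1 : (u ++ (replicate (k+1) false ++ v))[a+b]'hidx = false := by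
        rw [List.getElem_append_right (by omega),
          List.getElem_append_left (by simp; omega)]
        exact getElem_replicate _
      have hrne : rest ≠ [] := by
        intro hne
        rw [hne] at hlen
        simp at hlen; omega
      obtain ⟨c, rest', hc⟩ := List.exists_cons_of_ne_nil hrne
      have hctrue : c = true := by
        rcases hrest with h0 | h0
        · exact absurd h0 hrne
        · rw [hc] at h0; simpa using h0
      have v2 : (u ++ (replicate (k+1) false ++ v))[a+b]'hidx = true := by
        rw [List.getElem_of_eq hl]
        rw [List.getElem_append_right (by simp),
          List.getElem_append_right (by simp)]
        simp only [length_replicate]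
        have h0 : a + b - a - b = 0 := by omega
        simp only [h0]
        rw [List.getElem_of_eq hc]
        simp [hctrue]
      rw [v2] at v1; exact Bool.noConfusion v1



def blocks : List (ℕ × ℕ) → List Bool
  | [] => []
  | (a, b) :: p => replicate a true ++ replicate b false ++ blocks p

def Good (j k : ℕ) (p : List (ℕ × ℕ)) : Prop :=
  ∀ q ∈ p, 1 ≤ q.1 ∧ q.1 ≤ j ∧ 1 ≤ q.2 ∧ q.2 ≤ k

def tot (p : List (ℕ × ℕ)) : ℕ := (p.map fun q => q.1 + q.2).sum

@[simp] lemma tot_nil : tot [] = 0 := rfl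
@[simp] lemma tot_cons (q : ℕ × ℕ) (p : List (ℕ × ℕ)) : tot (q :: p) = q.1 + q.2 + tot p := by
  simp [tot, Nat.add_comm, Nat.add_assoc]

@[simp] lemma blocks_nil : blocks [] = [] := rfl

lemma blocks_cons (a b : ℕ) (p : List (ℕ × ℕ)) :
    blocks ((a, b) :: p) = replicate a true ++ replicate b false ++ blocks p := rfl

lemma blocks_length (p : List (ℕ × ℕ)) : (blocks p).length = tot p := by
  induction p with
  | nil => rfl
  | cons q t ih =>
    obtain ⟨a, b⟩ := q
    simp [blocks_cons, ih, Nat.add_assoc]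

lemma blocks_start {j k : ℕ} {p : List (ℕ × ℕ)} (hp : Good j k p) :
    blocks p = [] ∨ (blocks p).head? = some true := by
  cases p with
  | nil => exact Or.inl rfl
  | cons q t =>
    obtain ⟨a, b⟩ := q
    have ha : 1 ≤ a := (hp (a, b) mem_cons_self).1
    right
    obtain ⟨a', rfl⟩ : ∃ a', a = a' + 1 := ⟨a - 1, by omega⟩
    simp [blocks_cons, replicate_succ]

lemma good_cons_iff {j k : ℕ} {q : ℕ × ℕ} {p : List (ℕ × ℕ)} :
    Good j k (q :: p) ↔ (1 ≤ q.1 ∧ q.1 ≤ j ∧ 1 ≤ q.2 ∧ q.2 ≤ k) ∧ Good j k p := by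
  constructor
  · intro h
    exact ⟨h q mem_cons_self, fun r hr => h r (mem_cons_of_mem _ hr)⟩
  · rintro ⟨h1, h2⟩ r hr
    rcases mem_cons.mp hr with rfl | hr
    · exact h1
    · exact h2 r hr

lemma good_nil (j k : ℕ) : Good j k [] := fun q hq => absurd hq not_mem_nil

/-- Valid strings. -/
def Valid (j k : ℕ) (t : List Bool) : Prop :=
  ¬ replicate (j+1) true <:+: t ∧ ¬ replicate (k+1) false <:+: t

lemma valid_nil (j k : ℕ) : Valid j k [] := by
  constructor <;> · intro h
                    have := List.eq_nil_of_infix_nil h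
                    simp [List.replicate_succ] at this

lemma Valid.of_infix {j k : ℕ} {t s : List Bool} (h : Valid j k s) (hts : t <:+: s) :
    Valid j k t :=
  ⟨fun hc => h.1 (hc.trans hts), fun hc => h.2 (hc.trans hts)⟩

lemma blocks_valid {j k : ℕ} {p : List (ℕ × ℕ)} (hp : Good j k p) :
    Valid j k (blocks p) := by
  induction p with
  | nil => exact valid_nil j k
  | cons q t ih =>
    obtain ⟨a, b⟩ := q
    obtain ⟨⟨h1, h2, h3, h4⟩, hgt⟩ := good_cons_iff.mp hp
    have iht := ih hgt
    constructor
    · intro hbad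
      exact (iht).1 (infix_true_elim h2 h3 hbad)
    · intro hbad
      exact (iht).2 (infix_false_elim h4 (blocks_start hgt) hbad)


-- takeWhile helpers
lemma takeWhile_true_append (a : ℕ) (l : List Bool) :
    takeWhile id (replicate a true ++ l) = replicate a true ++ takeWhile id l := by
  rw [List.takeWhile_append]
  simp [List.takeWhile_replicate]

lemma takeWhile_false_append (b : ℕ) (l : List Bool) :
    takeWhile (fun c => !c) (replicate b false ++ l)
      = replicate b false ++ takeWhile (fun c => !c) l := by
  rw [List.takeWhile_append]
  simp [List.takeWhile_replicate]

lemma takeWhile_id_of_start_false {l : List Bool}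
    (h : l = [] ∨ l.head? = some false) : takeWhile id l = [] := by
  rcases h with rfl | h
  · rfl
  · cases l with
    | nil => rfl
    | cons c t =>
      simp only [head?_cons, Option.some_inj] at h
      subst h
      simp

lemma takeWhile_not_of_start_true {l : List Bool}
    (h : l = [] ∨ l.head? = some true) : takeWhile (fun c => !c) l = [] := by
  rcases h with rfl | h
  · rfl
  · cases l with
    | nil => rfl
    | cons c t =>
      simp only [head?_cons, Option.some_inj] at h
      subst h
      simp

lemma blocks_inj {j k : ℕ} : ∀ {p q : List (ℕ × ℕ)}, Good j k p → Good j k q →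
    blocks p = blocks q → p = q := by
  intro p
  induction p with
  | nil =>
    intro q _ hq h
    cases q with
    | nil => rfl
    | cons r t =>
      obtain ⟨c, d⟩ := r
      have hc : 1 ≤ c := (hq (c, d) mem_cons_self).1
      exfalso
      have := congrArg List.length h
      simp [blocks_cons] at this
      omega
  | cons r p ih =>
    intro q hp hq h
    obtain ⟨a, b⟩ := r
    have hab := hp (a, b) mem_cons_self
    have hpt : Good j k p := fun x hx => hp x (mem_cons_of_mem _ hx)
    cases q with
    | nil =>
      exfalso
      have := congrArg List.length h
      simp [blocks_cons] at this
      omega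
    | cons r' t =>
      obtain ⟨c, d⟩ := r'
      have hcd := hq (c, d) mem_cons_self
      have hqt : Good j k t := fun x hx => hq x (mem_cons_of_mem _ hx)
      rw [blocks_cons, blocks_cons] at h
      -- leading true run
      have e1 : takeWhile id (replicate a true ++ (replicate b false ++ blocks p))
          = replicate a true := by
        rw [takeWhile_true_append]
        have : takeWhile id (replicate b false ++ blocks p) = [] := by
          apply takeWhile_id_of_start_false
          right
          rw [List.head?_append_of_ne_nil]
          · obtain ⟨b', rfl⟩ : ∃ b', b = b' + 1 := ⟨b - 1, by omega⟩
            simp [replicate_succ]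
          · obtain ⟨b', rfl⟩ : ∃ b', b = b' + 1 := ⟨b - 1, by omega⟩
            simp [replicate_succ]
        rw [this, append_nil]
      have e2 : takeWhile id (replicate c true ++ (replicate d false ++ blocks t))
          = replicate c true := by
        rw [takeWhile_true_append]
        have : takeWhile id (replicate d false ++ blocks t) = [] := by
          apply takeWhile_id_of_start_false
          right
          rw [List.head?_append_of_ne_nil]
          · obtain ⟨d', rfl⟩ : ∃ d', d = d' + 1 := ⟨d - 1, by omega⟩
            simp [replicate_succ]
          · obtain ⟨d', rfl⟩ : ∃ d', d = d' + 1 := ⟨d - 1, by omega⟩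
            simp [replicate_succ]
        rw [this, append_nil]
      have hac : a = c := by
        have := congrArg (fun l => (takeWhile id l).length) h
        simp only [append_assoc] at this
        rw [e1, e2] at this
        simpa using this
      subst hac
      rw [append_assoc, append_assoc] at h
      have h2 := List.append_cancel_left h
      -- leading false run
      have f1 : takeWhile (fun c => !c) (replicate b false ++ blocks p)
          = replicate b false := by
        rw [takeWhile_false_append, takeWhile_not_of_start_true (blocks_start hpt), append_nil]
      have f2 : takeWhile (fun c => !c) (replicate d false ++ blocks t)
          = replicate d false := by
        rw [takeWhile_false_append, takeWhile_not_of_start_true (blocks_start hqt), append_nil]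
      have hbd : b = d := by
        have := congrArg (fun l => (takeWhile (fun c => !c) l).length) h2
        rw [f1, f2] at this
        simpa using this
      subst hbd
      have h3 := List.append_cancel_left h2
      rw [ih hpt hqt h3]


lemma replicate_prefix_of_le {c : Bool} {m n : ℕ} (h : m ≤ n) :
    replicate m c <+: replicate n c :=
  ⟨replicate (n - m) c, by rw [← replicate_add]; congr 1; omega⟩

lemma exists_blocks {j k : ℕ} : ∀ (n : ℕ) (t : List Bool), t.length ≤ n →
    Valid j k t → (t = [] ∨ t.head? = some true) → (t = [] ∨ t.getLast? = some false) →
    ∃ p, Good j k p ∧ blocks p = t := by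
  intro n
  induction n with
  | zero =>
    intro t hlen _ _ _
    have : t = [] := List.eq_nil_of_length_eq_zero (Nat.le_zero.mp hlen)
    exact ⟨[], good_nil j k, by rw [this, blocks_nil]⟩
  | succ n ih =>
    intro t hlen hval hstart hend
    rcases eq_or_ne t [] with rfl | hne
    · exact ⟨[], good_nil j k, rfl⟩
    · have hhead : t.head? = some true := hstart.resolve_left hne
      set a := (t.takeWhile id).length with ha_def
      have htw : t.takeWhile id = replicate a true := by
        rw [List.eq_replicate_iff]
        refine ⟨rfl, fun x hx => ?_⟩
        simpa using List.mem_takeWhile_imp hx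
      have ha : 1 ≤ a := by
        obtain ⟨c, t', rfl⟩ := List.exists_cons_of_ne_nil hne
        simp only [head?_cons, Option.some_inj] at hhead
        subst hhead
        simp [ha_def]
      set t₁ := t.dropWhile id with ht₁_def
      have ht : t = replicate a true ++ t₁ := by
        rw [← htw]; exact (List.takeWhile_append_dropWhile (p := id) (l := t)).symm
      rcases eq_or_ne t₁ [] with h1nil | h1ne
      · -- t is all trues: contradicts ending with false
        exfalso
        have hendt : t.getLast? = some false := hend.resolve_left hne
        rw [ht, h1nil, append_nil] at hendt
        obtain ⟨a', he⟩ : ∃ a', a = a' + 1 := ⟨a - 1, by omega⟩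
        rw [he, List.replicate_succ', List.getLast?_concat] at hendt
        simpa using hendt
      · have hhead1 : t₁.head? = some false := by
          rw [List.head?_eq_head h1ne]
          have := List.head_dropWhile_not id (l := t) h1ne
          simp only [id_eq] at this
          exact congrArg some this
        set b := (t₁.takeWhile (fun c => !c)).length with hb_def
        have htw2 : t₁.takeWhile (fun c => !c) = replicate b false := by
          rw [List.eq_replicate_iff]
          refine ⟨rfl, fun x hx => ?_⟩
          simpa using List.mem_takeWhile_imp hx
        have hb : 1 ≤ b := by
          obtain ⟨c, t', h'⟩ := List.exists_cons_of_ne_nil h1ne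
          rw [h'] at hhead1
          simp only [head?_cons, Option.some_inj] at hhead1
          subst hhead1
          rw [hb_def, h']
          simp
        set t₂ := t₁.dropWhile (fun c => !c) with ht₂_def
        have ht1 : t₁ = replicate b false ++ t₂ := by
          rw [← htw2]; exact (List.takeWhile_append_dropWhile (l := t₁)).symm
        have hstart2 : t₂ = [] ∨ t₂.head? = some true := by
          rcases eq_or_ne t₂ [] with h | h
          · exact Or.inl h
          · right
            rw [List.head?_eq_head h]
            have h2 : t₂.head h = true := by
              simpa using List.head_dropWhile_not (fun c => !c) (l := t₁) h
            exact congrArg some h2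
        have hsuf : t₂ <:+ t := ((List.dropWhile_suffix _)).trans
          (ht₁_def ▸ List.dropWhile_suffix id)
        have hend2 : t₂ = [] ∨ t₂.getLast? = some false := by
          rcases eq_or_ne t₂ [] with h | h
          · exact Or.inl h
          · right
            have hendt : t.getLast? = some false := hend.resolve_left hne
            obtain ⟨w, hw⟩ := hsuf
            rw [← hw, List.getLast?_append] at hendt
            rw [List.getLast?_eq_getLast h] at hendt ⊢
            simpa using hendt
        have hval2 : Valid j k t₂ := hval.of_infix hsuf.isInfix
        have hlen2 : t₂.length ≤ n := by
          have h1 : t.length = a + (b + t₂.length) := by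
            rw [ht, ht1]; simp
          omega
        obtain ⟨p', hgp', hbp'⟩ := ih t₂ hlen2 hval2 hstart2 hend2
        -- bounds on a and b
        have haj : a ≤ j := by
          by_contra hcon
          apply hval.1
          have h1 : replicate (j+1) true <+: replicate a true :=
            replicate_prefix_of_le (by omega)
          have h2 : replicate a true <+: t := htw ▸ List.takeWhile_prefix id
          exact (h1.trans h2).isInfix
        have hbk : b ≤ k := by
          by_contra hcon
          apply hval.2
          have h1 : replicate (k+1) false <+: replicate b false :=
            replicate_prefix_of_le (by omega)
          have h2 : replicate b false <+: t₁ := htw2 ▸ List.takeWhile_prefix _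
          have h3 : t₁ <:+ t := ht₁_def ▸ List.dropWhile_suffix id
          exact ((h1.trans h2).isInfix).trans h3.isInfix
        refine ⟨(a, b) :: p', ?_, ?_⟩
        · rw [good_cons_iff]
          exact ⟨⟨ha, haj, hb, hbk⟩, hgp'⟩
        · rw [blocks_cons, hbp', append_assoc, ← ht1, ← ht]

/-! Canonical decomposition of an arbitrary string. -/

def bc (s : List Bool) : ℕ := (s.takeWhile (fun c => !c)).length
def s1 (s : List Bool) : List Bool := s.dropWhile (fun c => !c)
def ac (s : List Bool) : ℕ := ((s1 s).reverse.takeWhile id).length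
def mid (s : List Bool) : List Bool := ((s1 s).reverse.dropWhile id).reverse

lemma s1_eq (s : List Bool) : s1 s = mid s ++ replicate (ac s) true := by
  have h1 : (s1 s).reverse.takeWhile id = replicate (ac s) true := by
    rw [List.eq_replicate_iff]
    exact ⟨rfl, fun x hx => by simpa using List.mem_takeWhile_imp hx⟩
  have h2 : (s1 s).reverse = replicate (ac s) true ++ (mid s).reverse := by
    rw [mid, List.reverse_reverse, ← h1]
    exact (List.takeWhile_append_dropWhile (p := id)).symm
  have := congrArg List.reverse h2
  rw [List.reverse_reverse, List.reverse_append, List.reverse_reverse,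
    List.reverse_replicate] at this
  exact this

lemma recon (s : List Bool) :
    s = replicate (bc s) false ++ mid s ++ replicate (ac s) true := by
  have h1 : s.takeWhile (fun c => !c) = replicate (bc s) false := by
    rw [List.eq_replicate_iff]
    exact ⟨rfl, fun x hx => by simpa using List.mem_takeWhile_imp hx⟩
  rw [append_assoc, ← s1_eq, ← h1, s1]
  exact (List.takeWhile_append_dropWhile (l := s)).symm

lemma mid_start (s : List Bool) : mid s = [] ∨ (mid s).head? = some true := by
  rcases eq_or_ne (mid s) [] with h | h
  · exact Or.inl h
  · right
    have hs1ne : s1 s ≠ [] := by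
      rw [s1_eq]
      intro hc
      exact h (by simpa using (List.append_eq_nil_iff.mp hc).1)
    have hh : (s1 s).head? = (mid s).head? := by
      rw [s1_eq, List.head?_append_of_ne_nil _ h]
    rw [← hh, List.head?_eq_head hs1ne]
    have := List.head_dropWhile_not (fun c => !c) (l := s) hs1ne
    have h2 : (s1 s).head hs1ne = true := by simpa [s1] using this
    exact congrArg some h2

lemma mid_end (s : List Bool) : mid s = [] ∨ (mid s).getLast? = some false := by
  rcases eq_or_ne (mid s) [] with h | h
  · exact Or.inl h
  · right
    have hrne : (mid s).reverse ≠ [] := by simpa using h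
    have hrev : (mid s).reverse = (s1 s).reverse.dropWhile id := by rw [mid, List.reverse_reverse]
    rw [← List.head?_reverse, List.head?_eq_head hrne]
    have h2 : (mid s).reverse.head hrne = false := by
      have := List.head_dropWhile_not id (l := (s1 s).reverse) (by rw [← hrev]; exact hrne)
      simp only [id_eq] at this
      have he : (mid s).reverse.head hrne
          = ((s1 s).reverse.dropWhile id).head (by rw [← hrev]; exact hrne) := by
        congr 1
      rw [he, this]
    exact congrArg some h2

lemma mid_infix (s : List Bool) : mid s <:+: s := by
  conv_rhs => rw [recon s]
  exact List.infix_append _ _ _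

lemma bc_le {j k : ℕ} {s : List Bool} (hs : Valid j k s) : bc s ≤ k := by
  by_contra hcon
  apply hs.2
  have h1 : s.takeWhile (fun c => !c) = replicate (bc s) false := by
    rw [List.eq_replicate_iff]
    exact ⟨rfl, fun x hx => by simpa using List.mem_takeWhile_imp hx⟩
  have h2 : replicate (bc s) false <+: s := h1 ▸ List.takeWhile_prefix _
  exact ((replicate_prefix_of_le (by omega)).trans h2).isInfix

lemma ac_le {j k : ℕ} {s : List Bool} (hs : Valid j k s) : ac s ≤ j := by
  by_contra hcon
  apply hs.1
  have h2 : replicate (ac s) true <:+ s1 s := ⟨mid s, (s1_eq s).symm⟩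
  have h3 : s1 s <:+ s := List.dropWhile_suffix _
  have h4 : replicate (ac s) true <:+: s := (h2.trans h3).isInfix
  exact ((replicate_prefix_of_le (by omega)).isInfix).trans h4

/-- Canonical decomposition of a valid string. -/
lemma valid_decomp {j k : ℕ} {s : List Bool} (hs : Valid j k s) :
    ∃ p, Good j k p ∧ blocks p = mid s := by
  apply exists_blocks (mid s).length (mid s) le_rfl (hs.of_infix (mid_infix s))
    (mid_start s) (mid_end s)

/-! ### Counting encodings -/

open Finset in
noncomputable def allP (j k : ℕ) : ℕ → Finset (List (ℕ × ℕ))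
  | 0 => {[]}
  | n+1 => insert []
      (((Finset.Icc 1 j) ×ˢ (Finset.Icc 1 k)).biUnion fun q => (allP j k n).image (List.cons q))

lemma length_le_tot {j k : ℕ} {p : List (ℕ × ℕ)} (h : Good j k p) : p.length ≤ tot p := by
  induction p with
  | nil => simp
  | cons q t ih =>
    have hq := h q mem_cons_self
    have := ih (fun r hr => h r (mem_cons_of_mem _ hr))
    simp only [tot_cons, length_cons]
    omega

lemma tot_le_length {j k : ℕ} {p : List (ℕ × ℕ)} (h : Good j k p) :
    tot p ≤ p.length * (j + k) := by
  induction p with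
  | nil => simp
  | cons q t ih =>
    have hq := h q mem_cons_self
    have := ih (fun r hr => h r (mem_cons_of_mem _ hr))
    simp only [tot_cons, length_cons]
    have : (t.length + 1) * (j + k) = t.length * (j + k) + (j + k) := by ring
    omega

lemma mem_allP {j k : ℕ} : ∀ {n : ℕ} {p : List (ℕ × ℕ)}, Good j k p → p.length ≤ n →
    p ∈ allP j k n := by
  intro n
  induction n with
  | zero =>
    intro p _ hl
    have : p = [] := List.eq_nil_of_length_eq_zero (Nat.le_zero.mp hl)
    simp [this, allP]
  | succ n ih =>
    intro p hg hl
    cases p with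
    | nil => simp [allP]
    | cons q t =>
      rw [allP]
      apply Finset.mem_insert_of_mem
      rw [Finset.mem_biUnion]
      refine ⟨q, ?_, ?_⟩
      · have := hg q mem_cons_self
        simp only [Finset.mem_product, Finset.mem_Icc]
        omega
      · rw [Finset.mem_image]
        exact ⟨t, ih (fun r hr => hg r (mem_cons_of_mem _ hr)) (by simpa using hl), rfl⟩

open scoped Classical in
noncomputable def goodLen (j k m : ℕ) : Finset (List (ℕ × ℕ)) :=
  (allP j k m).filter (fun p => p.length = m ∧ Good j k p)

open scoped Classical in
lemma mem_goodLen_iff {j k m : ℕ} {p : List (ℕ × ℕ)} :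
    p ∈ goodLen j k m ↔ p.length = m ∧ Good j k p := by
  rw [goodLen, Finset.mem_filter]
  constructor
  · exact fun h => h.2
  · intro h
    exact ⟨mem_allP h.2 h.1.le, h⟩

open scoped Classical in
noncomputable def GoodTot (j k n : ℕ) : Finset (List (ℕ × ℕ)) :=
  (allP j k n).filter (fun p => Good j k p ∧ tot p = n)

open scoped Classical in
lemma mem_GoodTot_iff {j k n : ℕ} {p : List (ℕ × ℕ)} :
    p ∈ GoodTot j k n ↔ Good j k p ∧ tot p = n := by
  rw [GoodTot, Finset.mem_filter]
  constructor
  · exact fun h => h.2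
  · intro h
    exact ⟨mem_allP h.1 ((length_le_tot h.1).trans h.2.le), h⟩

lemma pair_sum (j k : ℕ) (x : ℝ) :
    ∑ q ∈ (Finset.Icc 1 j) ×ˢ (Finset.Icc 1 k), x ^ (q.1 + q.2)
      = (∑ a ∈ Finset.Icc 1 j, x ^ a) * (∑ b ∈ Finset.Icc 1 k, x ^ b) := by
  rw [Finset.sum_mul_sum, Finset.sum_product]
  simp [pow_add]

lemma goodLen_sum (j k : ℕ) (x : ℝ) (m : ℕ) :
    ∑ p ∈ goodLen j k m, x ^ tot p
      = ((∑ a ∈ Finset.Icc 1 j, x ^ a) * (∑ b ∈ Finset.Icc 1 k, x ^ b)) ^ m := by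
  induction m with
  | zero =>
    have h0 : goodLen j k 0 = {[]} := by
      ext p
      rw [mem_goodLen_iff]
      constructor
      · intro h
        simpa using List.eq_nil_of_length_eq_zero h.1
      · intro h
        simp only [Finset.mem_singleton] at h
        exact ⟨by simp [h], by rw [h]; exact good_nil j k⟩
    simp [h0]
  | succ m ih =>
    have hdecomp : goodLen j k (m+1)
        = ((Finset.Icc 1 j) ×ˢ (Finset.Icc 1 k)).biUnion
            (fun q => (goodLen j k m).image (List.cons q)) := by
      ext p
      rw [mem_goodLen_iff, Finset.mem_biUnion]
      constructor
      · rintro ⟨hlen, hg⟩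
        cases p with
        | nil => simp at hlen
        | cons q t =>
          refine ⟨q, ?_, ?_⟩
          · have := hg q mem_cons_self
            simp only [Finset.mem_product, Finset.mem_Icc]
            omega
          · rw [Finset.mem_image]
            refine ⟨t, mem_goodLen_iff.mpr ⟨by simpa using hlen,
              fun r hr => hg r (mem_cons_of_mem _ hr)⟩, rfl⟩
      · rintro ⟨q, hq, hp⟩
        rw [Finset.mem_image] at hp
        obtain ⟨t, ht, rfl⟩ := hp
        obtain ⟨hlen, hg⟩ := mem_goodLen_iff.mp ht
        simp only [Finset.mem_product, Finset.mem_Icc] at hq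
        refine ⟨by simp [hlen], ?_⟩
        rw [good_cons_iff]
        exact ⟨⟨hq.1.1, hq.1.2, hq.2.1, hq.2.2⟩, hg⟩
    rw [hdecomp, Finset.sum_biUnion, pow_succ]
    · have : ∀ q ∈ (Finset.Icc 1 j) ×ˢ (Finset.Icc 1 k),
          ∑ p ∈ (goodLen j k m).image (List.cons q), x ^ tot p
            = x ^ (q.1 + q.2) * ∑ p ∈ goodLen j k m, x ^ tot p := by
        intro q _
        rw [Finset.sum_image (fun a _ b _ h => by simpa using h)]
        rw [Finset.mul_sum]
        exact Finset.sum_congr rfl fun t _ => by rw [tot_cons, pow_add]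
      rw [Finset.sum_congr rfl this, ← Finset.sum_mul, pair_sum, ih]
      ring
    · intro q1 h1 q2 h2 hne
      simp only [Finset.disjoint_left]
      intro p hp1 hp2
      rw [Finset.mem_image] at hp1 hp2
      obtain ⟨t1, _, he1⟩ := hp1
      obtain ⟨t2, _, he2⟩ := hp2
      apply hne
      rw [← he2] at he1
      exact (List.cons_eq_cons.mp he1).1

lemma valid_set_finite (j k n : ℕ) :
    {s : List Bool | s.length = n ∧ Valid j k s}.Finite :=
  (List.finite_length_eq Bool n).subset fun _ hs => hs.1

lemma card_le_Ncard {j k n : ℕ} (F : Finset (List (ℕ × ℕ)))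
    (hF : ∀ p ∈ F, Good j k p ∧ tot p = n) :
    F.card ≤ {s : List Bool | s.length = n ∧ Valid j k s}.ncard := by
  rw [← Set.ncard_coe_finset]
  refine Set.ncard_le_ncard_of_injOn blocks ?_ ?_ (valid_set_finite j k n)
  · intro p hp
    obtain ⟨hg, ht⟩ := hF p hp
    exact ⟨by rw [blocks_length, ht], blocks_valid hg⟩
  · intro p hp q hq h
    exact blocks_inj (hF p hp).1 (hF q hq).1 h

lemma Ncard_le {j k n : ℕ} :
    {s : List Bool | s.length = n ∧ Valid j k s}.ncard
      ≤ ∑ q ∈ (Finset.Icc 0 k) ×ˢ (Finset.Icc 0 j), (GoodTot j k (n - q.1 - q.2)).card := by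
  classical
  set T : Finset ((ℕ × ℕ) × List Bool) :=
    ((Finset.Icc 0 k) ×ˢ (Finset.Icc 0 j)).biUnion
      (fun q => ((GoodTot j k (n - q.1 - q.2)).image blocks).image (fun m => (q, m))) with hT
  have h1 : {s : List Bool | s.length = n ∧ Valid j k s}.ncard ≤ T.card := by
    rw [← Set.ncard_coe_finset]
    refine Set.ncard_le_ncard_of_injOn (fun s => ((bc s, ac s), mid s)) ?_ ?_ T.finite_toSet
    · intro s hs
      obtain ⟨hlen, hval⟩ := hs
      obtain ⟨p, hg, hbp⟩ := valid_decomp hval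
      have hlens : n = bc s + (mid s).length + ac s := by
        conv_lhs => rw [← hlen, recon s]
        simp [Nat.add_assoc]
      simp only [Finset.coe_biUnion, Set.mem_iUnion, Finset.mem_coe, hT]
      refine ⟨(bc s, ac s), ?_, ?_⟩
      · simp only [Finset.mem_product, Finset.mem_Icc]
        exact ⟨⟨Nat.zero_le _, bc_le hval⟩, ⟨Nat.zero_le _, ac_le hval⟩⟩
      · rw [Finset.mem_image]
        refine ⟨mid s, ?_, rfl⟩
        rw [Finset.mem_image]
        refine ⟨p, ?_, hbp⟩
        rw [mem_GoodTot_iff]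
        refine ⟨hg, ?_⟩
        rw [← blocks_length p, hbp]
        omega
    · intro s hs t ht h
      simp only [Prod.mk.injEq] at h
      rw [recon s, recon t, h.1.1, h.1.2, h.2]
  have h2 : T.card ≤ ∑ q ∈ (Finset.Icc 0 k) ×ˢ (Finset.Icc 0 j),
      (GoodTot j k (n - q.1 - q.2)).card := by
    refine (Finset.card_biUnion_le).trans ?_
    apply Finset.sum_le_sum
    intro q _
    exact (Finset.card_image_le).trans Finset.card_image_le
  exact h1.trans h2

/-! ### The two key estimates -/

lemma geom_bound {r : ℝ} (h0 : 0 ≤ r) (h1 : r < 1) (n : ℕ) :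
    ∑ i ∈ Finset.range n, r ^ i ≤ (1 - r)⁻¹ := by
  have := Summable.sum_le_tsum (Finset.range n) (fun i _ => pow_nonneg h0 i)
    (summable_geometric_of_lt_one h0 h1)
  rwa [tsum_geometric_of_lt_one h0 h1] at this

lemma cardGoodTot_bound {j k : ℕ} {x : ℝ} (hx0 : 0 ≤ x)
    (hq0 : 0 ≤ (∑ a ∈ Finset.Icc 1 j, x ^ a) * (∑ b ∈ Finset.Icc 1 k, x ^ b))
    (hq1 : (∑ a ∈ Finset.Icc 1 j, x ^ a) * (∑ b ∈ Finset.Icc 1 k, x ^ b) < 1) (m : ℕ) :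
    ((GoodTot j k m).card : ℝ) * x ^ m
      ≤ (1 - (∑ a ∈ Finset.Icc 1 j, x ^ a) * (∑ b ∈ Finset.Icc 1 k, x ^ b))⁻¹ := by
  classical
  set q := (∑ a ∈ Finset.Icc 1 j, x ^ a) * (∑ b ∈ Finset.Icc 1 k, x ^ b) with hq
  have h1 : ((GoodTot j k m).card : ℝ) * x ^ m = ∑ p ∈ GoodTot j k m, x ^ tot p := by
    rw [Finset.sum_congr rfl (fun p hp => by rw [(mem_GoodTot_iff.mp hp).2])]
    simp [mul_comm]
  have hsub : GoodTot j k m ⊆ (Finset.range (m+1)).biUnion (goodLen j k) := by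
    intro p hp
    obtain ⟨hg, ht⟩ := mem_GoodTot_iff.mp hp
    rw [Finset.mem_biUnion]
    refine ⟨p.length, ?_, mem_goodLen_iff.mpr ⟨rfl, hg⟩⟩
    rw [Finset.mem_range]
    have := length_le_tot hg
    omega
  have h2 : ∑ p ∈ GoodTot j k m, x ^ tot p
      ≤ ∑ p ∈ (Finset.range (m+1)).biUnion (goodLen j k), x ^ tot p :=
    Finset.sum_le_sum_of_subset_of_nonneg hsub (fun p _ _ => pow_nonneg hx0 _)
  have h3 : ∑ p ∈ (Finset.range (m+1)).biUnion (goodLen j k), x ^ tot p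
      = ∑ i ∈ Finset.range (m+1), q ^ i := by
    rw [Finset.sum_biUnion]
    · exact Finset.sum_congr rfl fun i _ => goodLen_sum j k x i
    · intro i _ i' _ hne
      simp only [Finset.disjoint_left]
      intro p hp1 hp2
      exact hne ((mem_goodLen_iff.mp hp1).1 ▸ (mem_goodLen_iff.mp hp2).1)
  rw [h1]
  exact h2.trans (h3 ▸ geom_bound hq0 hq1 (m+1))

lemma upper_estimate {j k : ℕ} {x : ℝ} (hx0 : 0 ≤ x) (hx1 : x ≤ 1)
    (hq0 : 0 ≤ (∑ a ∈ Finset.Icc 1 j, x ^ a) * (∑ b ∈ Finset.Icc 1 k, x ^ b))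
    (hq1 : (∑ a ∈ Finset.Icc 1 j, x ^ a) * (∑ b ∈ Finset.Icc 1 k, x ^ b) < 1) (n : ℕ) :
    ({s : List Bool | s.length = n ∧ Valid j k s}.ncard : ℝ) * x ^ n
      ≤ (k+1) * (j+1)
        * (1 - (∑ a ∈ Finset.Icc 1 j, x ^ a) * (∑ b ∈ Finset.Icc 1 k, x ^ b))⁻¹ := by
  classical
  set q := (∑ a ∈ Finset.Icc 1 j, x ^ a) * (∑ b ∈ Finset.Icc 1 k, x ^ b) with hq
  have h1 : ({s : List Bool | s.length = n ∧ Valid j k s}.ncard : ℝ)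
      ≤ ∑ r ∈ (Finset.Icc 0 k) ×ˢ (Finset.Icc 0 j), ((GoodTot j k (n - r.1 - r.2)).card : ℝ) := by
    rw [← Nat.cast_sum]
    exact_mod_cast Ncard_le
  have h2 : ({s : List Bool | s.length = n ∧ Valid j k s}.ncard : ℝ) * x ^ n
      ≤ ∑ r ∈ (Finset.Icc 0 k) ×ˢ (Finset.Icc 0 j),
          ((GoodTot j k (n - r.1 - r.2)).card : ℝ) * x ^ n := by
    rw [← Finset.sum_mul]
    exact mul_le_mul_of_nonneg_right h1 (pow_nonneg hx0 n)
  refine h2.trans ?_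
  have h3 : ∀ r ∈ (Finset.Icc 0 k) ×ˢ (Finset.Icc 0 j),
      ((GoodTot j k (n - r.1 - r.2)).card : ℝ) * x ^ n ≤ (1 - q)⁻¹ := by
    intro r _
    have hle : x ^ n ≤ x ^ (n - r.1 - r.2) :=
      pow_le_pow_of_le_one hx0 hx1 (by omega)
    calc ((GoodTot j k (n - r.1 - r.2)).card : ℝ) * x ^ n
        ≤ ((GoodTot j k (n - r.1 - r.2)).card : ℝ) * x ^ (n - r.1 - r.2) :=
          mul_le_mul_of_nonneg_left hle (Nat.cast_nonneg _)
      _ ≤ (1 - q)⁻¹ := cardGoodTot_bound hx0 hq0 hq1 _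
  refine (Finset.sum_le_sum h3).trans ?_
  rw [Finset.sum_const]
  simp only [Finset.card_product, Nat.card_Icc]
  rw [nsmul_eq_mul]
  apply le_of_eq
  push_cast
  ring

lemma lower_estimate {j k : ℕ} {x : ℝ} (hx0 : 0 ≤ x)
    (hsol : (∑ a ∈ Finset.Icc 1 j, x ^ a) * (∑ b ∈ Finset.Icc 1 k, x ^ b) = 1) (M : ℕ) :
    (M : ℝ) ≤ ∑ n ∈ Finset.Icc 1 (M * (j+k)),
      ({s : List Bool | s.length = n ∧ Valid j k s}.ncard : ℝ) * x ^ n := by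
  classical
  set U := (Finset.Icc 1 M).biUnion (goodLen j k) with hU
  have hdisj : ∑ p ∈ U, x ^ tot p = ∑ m ∈ Finset.Icc 1 M,
      ∑ p ∈ goodLen j k m, x ^ tot p := by
    rw [Finset.sum_biUnion]
    intro i _ i' _ hne
    simp only [Finset.disjoint_left]
    intro p hp1 hp2
    exact hne ((mem_goodLen_iff.mp hp1).1 ▸ (mem_goodLen_iff.mp hp2).1)
  have hsum : ∑ p ∈ U, x ^ tot p = (M : ℝ) := by
    rw [hdisj, Finset.sum_congr rfl (fun m _ => goodLen_sum j k x m)]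
    simp [hsol]
  have hmaps : ∀ p ∈ U, tot p ∈ Finset.Icc 1 (M * (j+k)) := by
    intro p hp
    rw [hU, Finset.mem_biUnion] at hp
    obtain ⟨m, hm, hpm⟩ := hp
    obtain ⟨hlen, hg⟩ := mem_goodLen_iff.mp hpm
    rw [Finset.mem_Icc] at hm ⊢
    have hl := length_le_tot hg
    have hr := tot_le_length (p := p) hg
    constructor
    · omega
    · calc tot p ≤ p.length * (j + k) := hr
        _ ≤ M * (j + k) := Nat.mul_le_mul_right _ (by omega)
  have hfib := Finset.sum_fiberwise_of_maps_to hmaps (fun p => x ^ tot p)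
  rw [← hsum, ← hfib]
  apply Finset.sum_le_sum
  intro n hn
  have hinner : ∑ p ∈ U.filter (fun p => tot p = n), x ^ tot p
      = ((U.filter (fun p => tot p = n)).card : ℝ) * x ^ n := by
    rw [Finset.sum_congr rfl (fun p hp => by rw [(Finset.mem_filter.mp hp).2])]
    simp [mul_comm]
  rw [hinner]
  apply mul_le_mul_of_nonneg_right _ (pow_nonneg hx0 n)
  have : ∀ p ∈ U.filter (fun p => tot p = n), Good j k p ∧ tot p = n := by
    intro p hp
    rw [Finset.mem_filter] at hp
    obtain ⟨hpU, hptot⟩ := hp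
    rw [hU, Finset.mem_biUnion] at hpU
    obtain ⟨m, _, hpm⟩ := hpU
    exact ⟨(mem_goodLen_iff.mp hpm).2, hptot⟩
  exact_mod_cast card_le_Ncard _ this

/-! ### Main theorem -/

lemma exp_pow_form (s : ℝ) (a : ℕ) : Real.exp (-(a : ℝ) * s) = Real.exp (-s) ^ a := by
  rw [← Real.exp_nat_mul]
  congr 1
  ring

end JKCap

open JKCap Filter

/-- **Combinatorial capacity of the `(j,k)` run-length constraint.** -/
theorem jk_combinatorial_capacity
    (j k : ℕ) (hj : 1 ≤ j) (hk : 1 ≤ k) (hjk : 1 < j * k)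
    (N : ℕ → ℕ)
    (hN : ∀ n : ℕ, N n = {s : List Bool | s.length = n ∧
      ¬ (List.replicate (j + 1) true) <:+: s ∧
      ¬ (List.replicate (k + 1) false) <:+: s}.ncard)
    (s : ℝ) (hs_pos : 0 < s)
    (hs_sol : (∑ a ∈ Finset.Icc 1 j, Real.exp (-(a : ℝ) * s)) *
        (∑ b ∈ Finset.Icc 1 k, Real.exp (-(b : ℝ) * s)) = 1) :
    Filter.limsup
        (fun n : ℕ => Real.log (N (n + 1)) / ((n : ℝ) + 1)) Filter.atTop
      = s := by
  have hNv : ∀ n : ℕ, N n = {t : List Bool | t.length = n ∧ Valid j k t}.ncard := hN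
  -- solution in power form
  have hsolx : (∑ a ∈ Finset.Icc 1 j, Real.exp (-s) ^ a) *
      (∑ b ∈ Finset.Icc 1 k, Real.exp (-s) ^ b) = 1 := by
    rw [← hs_sol]
    congr 1 <;> exact Finset.sum_congr rfl fun a _ => (exp_pow_form s a).symm
  set u : ℕ → ℝ := fun n : ℕ => Real.log (N (n + 1)) / ((n : ℝ) + 1) with hu
  have hu0 : ∀ n, 0 ≤ u n := by
    intro n
    apply div_nonneg _ (by positivity)
    rcases Nat.eq_zero_or_pos (N (n+1)) with h | h
    · simp [h]
    · apply Real.log_nonneg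
      exact_mod_cast h
  -- Upper bound: for every s' > s an exponential bound on N
  have key_upper : ∀ s' : ℝ, s < s' → ∃ C : ℝ, 1 ≤ C ∧
      ∀ n : ℕ, (N n : ℝ) ≤ C * Real.exp (s' * n) := by
    intro s' hs'
    set x : ℝ := Real.exp (-s') with hx
    have hx0 : 0 < x := Real.exp_pos _
    have hx1 : x < 1 := by
      rw [hx, Real.exp_lt_one_iff]
      linarith
    have hxlt : x < Real.exp (-s) := by
      rw [hx, Real.exp_lt_exp]
      linarith
    have hA : (∑ a ∈ Finset.Icc 1 j, x ^ a) < ∑ a ∈ Finset.Icc 1 j, Real.exp (-s) ^ a := by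
      apply Finset.sum_lt_sum_of_nonempty (Finset.nonempty_Icc.mpr hj)
      intro a ha
      rw [Finset.mem_Icc] at ha
      exact pow_lt_pow_left₀ hxlt hx0.le (by omega)
    have hB : (∑ b ∈ Finset.Icc 1 k, x ^ b) < ∑ b ∈ Finset.Icc 1 k, Real.exp (-s) ^ b := by
      apply Finset.sum_lt_sum_of_nonempty (Finset.nonempty_Icc.mpr hk)
      intro b hb
      rw [Finset.mem_Icc] at hb
      exact pow_lt_pow_left₀ hxlt hx0.le (by omega)
    have hA0 : 0 ≤ ∑ a ∈ Finset.Icc 1 j, x ^ a :=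
      Finset.sum_nonneg fun a _ => pow_nonneg hx0.le a
    have hB0 : 0 ≤ ∑ b ∈ Finset.Icc 1 k, x ^ b :=
      Finset.sum_nonneg fun b _ => pow_nonneg hx0.le b
    have hq1 : (∑ a ∈ Finset.Icc 1 j, x ^ a) * (∑ b ∈ Finset.Icc 1 k, x ^ b) < 1 := by
      calc (∑ a ∈ Finset.Icc 1 j, x ^ a) * (∑ b ∈ Finset.Icc 1 k, x ^ b)
          < (∑ a ∈ Finset.Icc 1 j, Real.exp (-s) ^ a) *
            (∑ b ∈ Finset.Icc 1 k, Real.exp (-s) ^ b) := mul_lt_mul'' hA hB hA0 hB0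
        _ = 1 := hsolx
    have hq0 : 0 ≤ (∑ a ∈ Finset.Icc 1 j, x ^ a) * (∑ b ∈ Finset.Icc 1 k, x ^ b) :=
      mul_nonneg hA0 hB0
    set C₀ : ℝ := (k+1) * (j+1) *
      (1 - (∑ a ∈ Finset.Icc 1 j, x ^ a) * (∑ b ∈ Finset.Icc 1 k, x ^ b))⁻¹ with hC₀
    refine ⟨max C₀ 1, le_max_right _ _, fun n => ?_⟩
    have hest := upper_estimate hx0.le hx1.le hq0 hq1 n
    rw [← hNv n] at hest
    have hxn : x ^ n = Real.exp (-(s' * n)) := by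
      rw [hx, ← Real.exp_nat_mul]
      congr 1
      ring
    have hxpos : (0:ℝ) < x ^ n := pow_pos hx0 n
    have h1 : (N n : ℝ) ≤ C₀ / x ^ n := (le_div_iff₀ hxpos).mpr hest
    have h2 : C₀ / x ^ n = C₀ * Real.exp (s' * n) := by
      rw [hxn, Real.exp_neg, div_eq_mul_inv, inv_inv]
    rw [h2] at h1
    exact h1.trans (mul_le_mul_of_nonneg_right (le_max_left _ _) (Real.exp_pos _).le)
  -- pointwise bound on u from key_upper
  have key_u : ∀ s' : ℝ, s < s' → ∃ C : ℝ, 1 ≤ C ∧ ∀ n : ℕ,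
      u n ≤ Real.log C / ((n : ℝ) + 1) + s' := by
    intro s' hs'
    obtain ⟨C, hC1, hC⟩ := key_upper s' hs'
    refine ⟨C, hC1, fun n => ?_⟩
    have hnpos : (0:ℝ) < (n : ℝ) + 1 := by positivity
    have hlog : Real.log (N (n+1)) ≤ Real.log C + s' * ((n:ℝ)+1) := by
      have hrhs : Real.log (C * Real.exp (s' * ((n:ℝ)+1)))
          = Real.log C + s' * ((n:ℝ)+1) := by
        rw [Real.log_mul (by linarith) (Real.exp_ne_zero _), Real.log_exp]
      rcases Nat.eq_zero_or_pos (N (n+1)) with h0 | h0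
      · rw [h0]
        simp only [Nat.cast_zero, Real.log_zero]
        have : 0 < s' := lt_trans hs_pos hs'
        nlinarith [Real.log_nonneg hC1]
      · have := hC (n+1)
        have hcast : ((n+1 : ℕ) : ℝ) = (n : ℝ) + 1 := by push_cast; ring
        rw [hcast] at this
        calc Real.log (N (n+1)) ≤ Real.log (C * Real.exp (s' * ((n:ℝ)+1))) :=
              Real.log_le_log (by exact_mod_cast h0) this
          _ = Real.log C + s' * ((n:ℝ)+1) := hrhs
    rw [hu]
    calc Real.log (N (n+1)) / ((n:ℝ)+1) ≤ (Real.log C + s' * ((n:ℝ)+1)) / ((n:ℝ)+1) := by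
          gcongr
      _ = Real.log C / ((n:ℝ)+1) + s' := by field_simp
  -- u is bounded above
  have hbdd : Filter.IsBoundedUnder (· ≤ ·) Filter.atTop u := by
    obtain ⟨C, hC1, hC⟩ := key_u (s+1) (by linarith)
    apply Filter.isBoundedUnder_of
    refine ⟨Real.log C + (s+1), fun n => ?_⟩
    have h1 := hC n
    have h2 : Real.log C / ((n:ℝ)+1) ≤ Real.log C := by
      rw [div_le_iff₀ (by positivity)]
      nlinarith [Real.log_nonneg hC1]
    linarith
  have hcobdd : Filter.IsCoboundedUnder (· ≤ ·) Filter.atTop u :=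
    Filter.IsBoundedUnder.isCoboundedUnder_le
      (Filter.isBoundedUnder_of ⟨0, fun n => hu0 n⟩)
  -- limsup ≤ s
  have hle : Filter.limsup u Filter.atTop ≤ s := by
    apply le_of_forall_pos_le_add
    intro ε hε
    obtain ⟨C, hC1, hC⟩ := key_u (s+ε) (by linarith)
    set v : ℕ → ℝ := fun n => Real.log C / ((n:ℝ)+1) + (s+ε) with hv
    have hvt : Filter.Tendsto v Filter.atTop (nhds (s+ε)) := by
      have h0 : Filter.Tendsto (fun n : ℕ => Real.log C / ((n:ℝ)+1))
          Filter.atTop (nhds 0) := by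
        have h := (tendsto_const_div_atTop_nhds_zero_nat (Real.log C)).comp
          (Filter.tendsto_add_atTop_nat 1)
        have he : ((fun n : ℕ => Real.log C / (n:ℝ)) ∘ fun a => a + 1)
            = fun n : ℕ => Real.log C / ((n:ℝ)+1) := by
          funext n
          simp only [Function.comp_apply]
          norm_cast
        rwa [he] at h
      have h1 := h0.add (tendsto_const_nhds (x := s + ε) (f := Filter.atTop))
      rw [zero_add] at h1
      exact h1
    calc Filter.limsup u Filter.atTop ≤ Filter.limsup v Filter.atTop :=
          Filter.limsup_le_limsup (Filter.Eventually.of_forall hC) hcobdd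
            (hvt.isBoundedUnder_le)
      _ = s + ε := hvt.limsup_eq
  -- limsup ≥ s
  have hge : s ≤ Filter.limsup u Filter.atTop := by
    by_contra hcon
    push_neg at hcon
    set t : ℝ := (Filter.limsup u Filter.atTop + s) / 2 with htdef
    have hlt1 : Filter.limsup u Filter.atTop < t := by rw [htdef]; linarith
    have hlt2 : t < s := by rw [htdef]; linarith
    have hev : ∀ᶠ n in Filter.atTop, u n < t :=
      Filter.eventually_lt_of_limsup_lt hlt1 hbdd
    obtain ⟨n₀, hn₀⟩ := Filter.eventually_atTop.mp hev
    have hNle : ∀ m : ℕ, n₀ + 1 ≤ m → (N m : ℝ) ≤ Real.exp (t * m) := by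
      intro m hm
      obtain ⟨n, rfl⟩ : ∃ n, m = n + 1 := ⟨m - 1, by omega⟩
      have hun := hn₀ n (by omega)
      rw [hu] at hun
      have hnpos : (0:ℝ) < (n : ℝ) + 1 := by positivity
      have hlog : Real.log (N (n+1)) < t * ((n:ℝ)+1) := by
        rw [div_lt_iff₀ hnpos] at hun
        linarith [hun]
      have hcast : ((n+1 : ℕ) : ℝ) = (n : ℝ) + 1 := by push_cast; ring
      rw [hcast]
      rcases Nat.eq_zero_or_pos (N (n+1)) with h0 | h0
      · rw [h0]; exact_mod_cast (Real.exp_pos _).le.trans_eq' (by norm_num)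
      · have : (N (n+1) : ℝ) = Real.exp (Real.log (N (n+1))) :=
          (Real.exp_log (by exact_mod_cast h0)).symm
        rw [this]
        exact (Real.exp_le_exp.mpr hlog.le)
    -- a uniform constant
    set C₀ : ℝ := 1 + ∑ i ∈ Finset.range (n₀+1), (N i : ℝ) * Real.exp (-(t * i)) with hC₀def
    have hC₀1 : 1 ≤ C₀ := by
      rw [hC₀def]
      have : 0 ≤ ∑ i ∈ Finset.range (n₀+1), (N i : ℝ) * Real.exp (-(t * i)) :=
        Finset.sum_nonneg fun i _ => mul_nonneg (Nat.cast_nonneg _) (Real.exp_pos _).le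
      linarith
    have hNall : ∀ m : ℕ, (N m : ℝ) ≤ C₀ * Real.exp (t * m) := by
      intro m
      rcases le_or_gt m n₀ with hm | hm
      · have h1 : (N m : ℝ) * Real.exp (-(t * m)) ≤ C₀ := by
          rw [hC₀def]
          have := Finset.single_le_sum
            (f := fun i => (N i : ℝ) * Real.exp (-(t * i)))
            (fun i _ => mul_nonneg (Nat.cast_nonneg _) (Real.exp_pos _).le)
            (Finset.mem_range.mpr (by omega : m < n₀ + 1))
          have h2 : (N m:ℝ) * Real.exp (-(t * m))
              ≤ ∑ i ∈ Finset.range (n₀+1), (N i : ℝ) * Real.exp (-(t * i)) := this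
          linarith
        have := mul_le_mul_of_nonneg_right h1 (Real.exp_pos (t * m)).le
        rwa [mul_assoc, ← Real.exp_add, neg_add_cancel, Real.exp_zero, mul_one] at this
      · calc (N m : ℝ) ≤ Real.exp (t * m) := hNle m (by omega)
          _ ≤ C₀ * Real.exp (t * m) := by nlinarith [Real.exp_pos (t * m), hC₀1]
    -- the geometric ratio
    set r : ℝ := Real.exp (t - s) with hrdef
    have hr0 : 0 ≤ r := (Real.exp_pos _).le
    have hr1 : r < 1 := by
      rw [hrdef, Real.exp_lt_one_iff]
      linarith
    -- upper bound for the partial sums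
    have hsumbdd : ∀ L : ℕ, ∑ n ∈ Finset.Icc 1 L,
        ({t : List Bool | t.length = n ∧ Valid j k t}.ncard : ℝ) * Real.exp (-s) ^ n
        ≤ C₀ * (1 - r)⁻¹ := by
      intro L
      have hterm : ∀ n ∈ Finset.Icc 1 L,
          ({t : List Bool | t.length = n ∧ Valid j k t}.ncard : ℝ) * Real.exp (-s) ^ n
          ≤ C₀ * r ^ n := by
        intro n _
        have hxn : Real.exp (-s) ^ n = Real.exp (-(s * n)) := by
          rw [← Real.exp_nat_mul]; congr 1; ring
        have hrn : r ^ n = Real.exp ((t - s) * n) := by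
          rw [hrdef, ← Real.exp_nat_mul]; congr 1; ring
        rw [← hNv n, hxn, hrn]
        calc (N n : ℝ) * Real.exp (-(s * n))
            ≤ (C₀ * Real.exp (t * n)) * Real.exp (-(s * n)) :=
              mul_le_mul_of_nonneg_right (hNall n) (Real.exp_pos _).le
          _ = C₀ * Real.exp ((t - s) * n) := by
              rw [mul_assoc, ← Real.exp_add]; congr 2; ring
      calc ∑ n ∈ Finset.Icc 1 L,
            ({t : List Bool | t.length = n ∧ Valid j k t}.ncard : ℝ) * Real.exp (-s) ^ n
          ≤ ∑ n ∈ Finset.Icc 1 L, C₀ * r ^ n := Finset.sum_le_sum hterm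
        _ ≤ ∑ n ∈ Finset.range (L+1), C₀ * r ^ n := by
            apply Finset.sum_le_sum_of_subset_of_nonneg
            · intro n hn
              rw [Finset.mem_Icc] at hn
              rw [Finset.mem_range]
              omega
            · intro n _ _
              exact mul_nonneg (by linarith) (pow_nonneg hr0 n)
        _ = C₀ * ∑ n ∈ Finset.range (L+1), r ^ n := by rw [Finset.mul_sum]
        _ ≤ C₀ * (1 - r)⁻¹ :=
            mul_le_mul_of_nonneg_left (geom_bound hr0 hr1 (L+1)) (by linarith)
    -- contradiction with the lower estimate
    set M : ℕ := ⌈C₀ * (1 - r)⁻¹⌉₊ + 1 with hMdef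
    have hlower := lower_estimate (j := j) (k := k) (Real.exp_pos (-s)).le hsolx M
    have hupper := hsumbdd (M * (j + k))
    have hM : C₀ * (1 - r)⁻¹ + 1 ≤ (M : ℝ) := by
      rw [hMdef]
      push_cast
      linarith [Nat.le_ceil (C₀ * (1 - r)⁻¹)]
    linarith
  exact le_antisymm hle hge
end

section
/- Fix integers j, k ≥ 1 with j·k > 1. For n ≥ 1 let N(n) be the number of binary strings of length n containing no run of more than j consecutive 1s and no run of more than k consecutive 0s. Then inf{σ ∈ ℝ : Σ_{n=1}^{∞} N(n)·e^{-n·σ} converges} = s*, where s* is the unique positive real solution of (Σ_{a=1}^{j} e^{-a·s})·(Σ_{b=1}^{k} e^{-b·s}) = 1. -/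
private lemma repl_not_prefix (c : Bool) :
    ∀ (a m : ℕ) (t : List Bool), t.head? ≠ some c → a < m →
      ¬ List.replicate m c <+: List.replicate a c ++ t := by
  intro a
  induction a with
  | zero =>
    intro m t ht hm hpre
    obtain ⟨m', rfl⟩ : ∃ m', m = m' + 1 := ⟨m - 1, by omega⟩
    rw [List.replicate_succ] at hpre
    simp only [List.replicate_zero, List.nil_append] at hpre
    cases t with
    | nil => simp at hpre
    | cons x t' =>
      rw [List.cons_prefix_cons] at hpre
      exact ht (by rw [List.head?_cons, hpre.1])
  | succ a ih =>
    intro m t ht hm hpre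
    obtain ⟨m', rfl⟩ : ∃ m', m = m' + 1 := ⟨m - 1, by omega⟩
    rw [List.replicate_succ, List.replicate_succ, List.cons_append,
      List.cons_prefix_cons] at hpre
    exact ih m' t ht (by omega) hpre.2

private lemma repl_not_infix (c : Bool) :
    ∀ (a m : ℕ) (t : List Bool), t.head? ≠ some c → a < m →
      ¬ List.replicate m c <:+: t → ¬ List.replicate m c <:+: List.replicate a c ++ t := by
  intro a
  induction a with
  | zero => intro m t ht hm hnt; simpa using hnt
  | succ a ih =>
    intro m t ht hm hnt hin
    rw [List.replicate_succ, List.cons_append, List.infix_cons_iff] at hin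
    rcases hin with h | h
    · exact repl_not_prefix c (a + 1) m t ht hm
        (by rw [List.replicate_succ, List.cons_append]; exact h)
    · exact ih m t ht (by omega) hnt h

private lemma repl_other_infix (c : Bool) :
    ∀ (a m : ℕ) (t : List Bool), 0 < m →
      List.replicate m (!c) <:+: List.replicate a c ++ t → List.replicate m (!c) <:+: t := by
  intro a
  induction a with
  | zero => intro m t _ h; simpa using h
  | succ a ih =>
    intro m t hm h
    rw [List.replicate_succ, List.cons_append, List.infix_cons_iff] at h
    rcases h with h | h
    · exfalso
      obtain ⟨m', rfl⟩ : ∃ m', m = m' + 1 := ⟨m - 1, by omega⟩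
      rw [List.replicate_succ, List.cons_prefix_cons] at h
      exact Bool.not_ne_self c h.1
    · exact ih m t hm h

private lemma repl_append_eq (c : Bool) :
    ∀ (a a' : ℕ) (t t' : List Bool), t.head? ≠ some c → t'.head? ≠ some c →
      List.replicate a c ++ t = List.replicate a' c ++ t' → a = a' ∧ t = t' := by
  intro a
  induction a with
  | zero =>
    intro a' t t' ht ht' h
    cases a' with
    | zero => simpa using h
    | succ a' =>
      exfalso
      rw [List.replicate_succ] at h
      simp only [List.replicate_zero, List.nil_append, List.cons_append] at h
      exact ht (by rw [h, List.head?_cons])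
  | succ a ih =>
    intro a' t t' ht ht' h
    cases a' with
    | zero =>
      exfalso
      rw [List.replicate_succ] at h
      simp only [List.replicate_zero, List.nil_append, List.cons_append] at h
      exact ht' (by rw [← h, List.head?_cons])
    | succ a' =>
      rw [List.replicate_succ, List.replicate_succ, List.cons_append, List.cons_append,
        List.cons.injEq] at h
      obtain ⟨h1, h2⟩ := ih a' t t' ht ht' h.2
      exact ⟨by omega, h2⟩

private def jkAlt : ℕ → Bool → List Bool
  | 0, _ => []
  | n + 1, b => b :: jkAlt n (!b)

private lemma jkAlt_length : ∀ (n : ℕ) (b : Bool), (jkAlt n b).length = n := by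
  intro n
  induction n with
  | zero => intro b; rfl
  | succ n ih => intro b; simp [jkAlt, ih]

private lemma jkAlt_head? (n : ℕ) (b : Bool) : (jkAlt (n + 1) b).head? = some b := rfl

private lemma jkAlt_no_pair : ∀ (n : ℕ) (b c : Bool), ¬ [c, c] <:+: jkAlt n b := by
  intro n
  induction n with
  | zero => intro b c h; simp [jkAlt] at h
  | succ n ih =>
    intro b c h
    rw [show jkAlt (n + 1) b = b :: jkAlt n (!b) from rfl, List.infix_cons_iff] at h
    rcases h with h | h
    · rw [List.cons_prefix_cons] at h
      obtain ⟨rfl, h⟩ := h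
      cases n with
      | zero => simp [jkAlt] at h
      | succ n =>
        rw [show jkAlt (n + 1) (!c) = (!c) :: jkAlt n (!!c) from rfl,
          List.cons_prefix_cons] at h
        exact Bool.not_ne_self c h.1.symm
    · exact ih (!b) c h

private lemma pair_infix_of_repl (c : Bool) (m : ℕ) (hm : 2 ≤ m) (l : List Bool)
    (h : List.replicate m c <:+: l) : [c, c] <:+: l := by
  refine List.IsInfix.trans (List.IsPrefix.isInfix ⟨List.replicate (m - 2) c, ?_⟩) h
  have hm' : m = (m - 2) + 1 + 1 := by omega
  rw [hm', List.replicate_succ, List.replicate_succ]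
  rfl

/-- the set of valid strings of length `n` whose runs of `c` have length `≤ jc`,
runs of `!c` have length `≤ kc`, and which do not start with `!c`. -/
private def jkW (jc kc : ℕ) (c : Bool) (n : ℕ) : Set (List Bool) :=
  {t : List Bool | t.length = n ∧ ¬ List.replicate (jc + 1) c <:+: t ∧
    ¬ List.replicate (kc + 1) (!c) <:+: t ∧ t.head? ≠ some (!c)}

private lemma jkW_finite (jc kc : ℕ) (c : Bool) (n : ℕ) : (jkW jc kc c n).Finite :=
  (List.finite_length_eq Bool n).subset fun _ ht => ht.1

private lemma jkW_nonempty (jc kc : ℕ) (hj : 1 ≤ jc) (hk : 1 ≤ kc) (c : Bool) (n : ℕ) : (jkW jc kc c n).Nonempty := by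
  refine ⟨jkAlt n c, jkAlt_length n c, ?_, ?_, ?_⟩
  · exact fun h => jkAlt_no_pair n c c (pair_infix_of_repl c (jc + 1) (by omega) _ h)
  · exact fun h => jkAlt_no_pair n c (!c) (pair_infix_of_repl (!c) (kc + 1) (by omega) _ h)
  · cases n with
    | zero => simp [jkAlt]
    | succ n =>
      rw [jkAlt_head?]
      simp

private lemma my_ncard_biUnion {α : Type*} (A : Finset ℕ) (S : ℕ → Set α)
    (hfin : ∀ a ∈ A, (S a).Finite)
    (hdisj : ∀ a ∈ A, ∀ b ∈ A, a ≠ b → Disjoint (S a) (S b)) :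
    (⋃ a ∈ A, S a).ncard = ∑ a ∈ A, (S a).ncard := by
  classical
  induction A using Finset.induction_on with
  | empty => simp
  | insert x A' hx ih =>
    rw [Finset.sum_insert hx, Finset.set_biUnion_insert]
    refine (Set.ncard_union_eq ?_ (hfin x (Finset.mem_insert_self x A')) ?_).trans ?_
    · rw [Set.disjoint_iUnion₂_right]
      intro a ha
      exact hdisj x (Finset.mem_insert_self x A') a (Finset.mem_insert_of_mem ha)
        (fun h => hx (h ▸ ha))
    · exact Set.Finite.biUnion A'.finite_toSet fun a ha => hfin a (Finset.mem_insert_of_mem ha)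
    · rw [ih (fun a ha => hfin a (Finset.mem_insert_of_mem ha))
        (fun a ha b hb hab => hdisj a (Finset.mem_insert_of_mem ha) b
          (Finset.mem_insert_of_mem hb) hab)]

private lemma jkW_card (jc kc : ℕ) (hj : 1 ≤ jc) (c : Bool) (n : ℕ) (hn : 1 ≤ n) :
    (jkW jc kc c n).ncard =
      ∑ a ∈ Finset.Icc 1 (min jc n), (jkW kc jc (!c) (n - a)).ncard := by
  have hdecomp : jkW jc kc c n = ⋃ a ∈ Finset.Icc 1 (min jc n),
      (fun t => List.replicate a c ++ t) '' jkW kc jc (!c) (n - a) := by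
    ext l
    simp only [Set.mem_iUnion, Set.mem_image, Finset.mem_Icc, jkW, Set.mem_setOf_eq,
      Bool.not_not, exists_prop]
    constructor
    · rintro ⟨hlen, hrc, hrk, hhd⟩
      set p : Bool → Bool := fun x => x == c with hp
      set a := (l.takeWhile p).length with hadef
      set t := l.dropWhile p with htdef
      have htw : l.takeWhile p = List.replicate a c :=
        List.eq_replicate_iff.mpr ⟨rfl, fun b hb => by
          have := List.mem_takeWhile_imp hb
          simpa [hp] using this⟩
      have hl : List.replicate a c ++ t = l := by
        rw [← htw, htdef]; exact List.takeWhile_append_dropWhile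
      have hth : t.head? ≠ some c := by
        intro hcon
        have h2 := List.head?_dropWhile_not p l
        rw [← htdef, hcon] at h2
        simp [hp] at h2
      have hlnil : l ≠ [] := by
        intro h; rw [h] at hlen; simp at hlen; omega
      have ha1 : 1 ≤ a := by
        by_contra h
        have ha0 : a = 0 := by omega
        rw [ha0] at hl
        simp only [List.replicate_zero, List.nil_append] at hl
        cases l with
        | nil => exact hlnil rfl
        | cons x l' =>
          have hx : x ≠ c := by
            intro h'; apply hth; rw [hl, List.head?_cons, h']
          have hx' : x ≠ !c := by
            intro h'; apply hhd; rw [List.head?_cons, h']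
          cases x <;> cases c <;> simp_all
      have hsuf : t <:+ l := ⟨List.replicate a c, hl⟩
      have haj : a ≤ jc := by
        by_contra h
        apply hrc
        have h1 : List.replicate (jc + 1) c <+: List.replicate a c :=
          ⟨List.replicate (a - (jc + 1)) c, by
            rw [← List.replicate_add]; congr 1; omega⟩
        exact (h1.trans ⟨t, hl⟩).isInfix
      have han : a ≤ n := by
        have := (List.takeWhile_prefix p (l := l)).length_le
        rw [hlen] at this; exact this
      have htlen : t.length = n - a := by
        have := congrArg List.length hl
        simp only [List.length_append, List.length_replicate, hlen] at this
        omega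
      exact ⟨a, ⟨ha1, le_min haj han⟩, t,
        ⟨htlen, fun h => hrk (h.trans hsuf.isInfix),
          fun h => hrc (h.trans hsuf.isInfix), hth⟩, hl⟩
    · rintro ⟨a, ⟨ha1, ha2⟩, t, ⟨htlen, htk, htj, hth⟩, rfl⟩
      have haj : a ≤ jc := le_trans ha2 (min_le_left _ _)
      have han : a ≤ n := le_trans ha2 (min_le_right _ _)
      refine ⟨?_, ?_, ?_, ?_⟩
      · rw [List.length_append, List.length_replicate, htlen]; omega
      · exact repl_not_infix c a (jc + 1) t hth (by omega) htj
      · exact fun h => htk (repl_other_infix c a (kc + 1) t (by omega) h)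
      · obtain ⟨a', rfl⟩ : ∃ a', a = a' + 1 := ⟨a - 1, by omega⟩
        rw [List.replicate_succ, List.cons_append, List.head?_cons]
        simp
  rw [hdecomp, my_ncard_biUnion]
  · exact Finset.sum_congr rfl fun a _ =>
      Set.ncard_image_of_injective _ fun t t' h => List.append_cancel_left h
  · exact fun a _ => (jkW_finite kc jc (!c) (n - a)).image _
  · intro a _ b _ hab
    rw [Set.disjoint_left]
    rintro l ⟨t, ht, rfl⟩ ⟨t', ht', heq⟩
    have h1 : t.head? ≠ some c := by simpa using ht.2.2.2
    have h2 : t'.head? ≠ some c := by simpa using ht'.2.2.2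
    exact hab ((repl_append_eq c a b t t' h1 h2 heq.symm).1)

private lemma renewal_bounds (J K : ℕ) (hJ : 1 ≤ J) (hK : 1 ≤ K) (x : ℝ) (hx : 0 < x)
    (hsum : (∑ a ∈ Finset.Icc 1 J, x ^ a) * (∑ b ∈ Finset.Icc 1 K, x ^ b) = 1)
    (u : ℕ → ℝ) (hpos : ∀ n, 0 < u n)
    (hrec : ∀ n, J + K + 1 ≤ n →
      u n = ∑ a ∈ Finset.Icc 1 J, ∑ b ∈ Finset.Icc 1 K, x ^ (a + b) * u (n - (a + b))) :
    ∃ c C : ℝ, 0 < c ∧ ∀ n, 1 ≤ n → c ≤ u n ∧ u n ≤ C := by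
  have hne : (Finset.Icc 1 (J + K)).Nonempty := by
    rw [Finset.nonempty_Icc]; omega
  set c := (Finset.Icc 1 (J + K)).inf' hne u with hc
  set C := (Finset.Icc 1 (J + K)).sup' hne u with hC
  have hcpos : 0 < c := by
    rw [hc, Finset.lt_inf'_iff]
    exact fun i _ => hpos i
  refine ⟨c, C, hcpos, ?_⟩
  intro n
  induction n using Nat.strong_induction_on with
  | _ n ih =>
    intro hn1
    by_cases hsmall : n ≤ J + K
    · have hmem : n ∈ Finset.Icc 1 (J + K) := Finset.mem_Icc.mpr ⟨hn1, hsmall⟩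
      exact ⟨Finset.inf'_le u hmem, Finset.le_sup' u hmem⟩
    · have hbig : J + K + 1 ≤ n := by omega
      have hrw := hrec n hbig
      have hterm : ∀ a ∈ Finset.Icc 1 J, ∀ b ∈ Finset.Icc 1 K,
          c ≤ u (n - (a + b)) ∧ u (n - (a + b)) ≤ C := by
        intro a ha b hb
        rw [Finset.mem_Icc] at ha hb
        exact ih (n - (a + b)) (by omega) (by omega)
      have hw : ∀ a ∈ Finset.Icc 1 J, ∀ b ∈ Finset.Icc 1 K, (0:ℝ) ≤ x ^ (a + b) :=
        fun a _ b _ => le_of_lt (pow_pos hx _)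
      have hsum1 : ∑ a ∈ Finset.Icc 1 J, ∑ b ∈ Finset.Icc 1 K, x ^ (a + b) = 1 := by
        rw [← hsum, Finset.sum_mul_sum]
        exact Finset.sum_congr rfl fun a _ => Finset.sum_congr rfl fun b _ => pow_add x a b
      constructor
      · calc c = ∑ a ∈ Finset.Icc 1 J, ∑ b ∈ Finset.Icc 1 K, x ^ (a + b) * c := by
              simp only [← Finset.sum_mul]
              rw [hsum1, one_mul]
          _ ≤ u n := by
              rw [hrw]
              refine Finset.sum_le_sum fun a ha => Finset.sum_le_sum fun b hb => ?_
              exact mul_le_mul_of_nonneg_left (hterm a ha b hb).1 (hw a ha b hb)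
      · calc u n ≤ ∑ a ∈ Finset.Icc 1 J, ∑ b ∈ Finset.Icc 1 K, x ^ (a + b) * C := by
              rw [hrw]
              refine Finset.sum_le_sum fun a ha => Finset.sum_le_sum fun b hb => ?_
              exact mul_le_mul_of_nonneg_left (hterm a ha b hb).2 (hw a ha b hb)
          _ = C := by
              simp only [← Finset.sum_mul]
              rw [hsum1, one_mul]

/-- **Abscissa of convergence of the `(j,k)` generating function.** For
`j, k ≥ 1` with `j·k > 1`, let `N n` be the number of binary strings of length
`n` with no run of more than `j` consecutive `1`s and no run of more than `k`
consecutive `0`s. Then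
`inf {σ ∈ ℝ : ∑_{n ≥ 1} N n · e^{-n·σ} converges}` equals the unique positive
real solution `s*` of `(∑_{a=1}^{j} e^{-a·s}) · (∑_{b=1}^{k} e^{-b·s}) = 1`. -/
theorem jk_abscissa_of_convergence
    (j k : ℕ) (hj : 1 ≤ j) (hk : 1 ≤ k) (hjk : 1 < j * k)
    (N : ℕ → ℕ)
    (hN : ∀ n : ℕ, N n = {s : List Bool | s.length = n ∧
      ¬ (List.replicate (j + 1) true) <:+: s ∧
      ¬ (List.replicate (k + 1) false) <:+: s}.ncard)
    (s : ℝ) (hs_pos : 0 < s)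
    (hs_sol : (∑ a ∈ Finset.Icc 1 j, Real.exp (-(a : ℝ) * s)) *
        (∑ b ∈ Finset.Icc 1 k, Real.exp (-(b : ℝ) * s)) = 1) :
    sInf {σ : ℝ |
        Summable fun n : ℕ => (N (n + 1) : ℝ) * Real.exp (-((n : ℝ) + 1) * σ)}
      = s := by
  set x := Real.exp (-s) with hxdef
  have hx : 0 < x := Real.exp_pos _
  have hsol : (∑ a ∈ Finset.Icc 1 j, x ^ a) * (∑ b ∈ Finset.Icc 1 k, x ^ b) = 1 := by
    rw [← hs_sol]
    congr 1 <;>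
    · refine Finset.sum_congr rfl fun m _ => ?_
      rw [hxdef, ← Real.exp_nat_mul]
      congr 1; ring
  set g : ℕ → ℝ := fun m => ((jkW j k true m).ncard : ℝ) * x ^ m with hgdef
  set h : ℕ → ℝ := fun m => ((jkW k j false m).ncard : ℝ) * x ^ m with hhdef
  have hxpow : ∀ a n : ℕ, a ≤ n → x ^ n = x ^ a * x ^ (n - a) := by
    intro a n ha
    rw [← pow_add]
    congr 1
    omega
  -- one-step recurrences
  have hg1 : ∀ n, j + 1 ≤ n → g n = ∑ a ∈ Finset.Icc 1 j, x ^ a * h (n - a) := by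
    intro n hn
    have hcard := jkW_card j k hj true n (by omega)
    rw [min_eq_left (by omega : j ≤ n)] at hcard
    simp only [Bool.not_true] at hcard
    calc g n = ∑ a ∈ Finset.Icc 1 j, ((jkW k j false (n - a)).ncard : ℝ) * x ^ n := by
          simp only [hgdef]
          rw [hcard]
          push_cast
          rw [Finset.sum_mul]
      _ = _ := by
          refine Finset.sum_congr rfl fun a ha => ?_
          rw [Finset.mem_Icc] at ha
          simp only [hhdef]
          rw [hxpow a n (by omega)]
          ring
  have hh1 : ∀ n, k + 1 ≤ n → h n = ∑ b ∈ Finset.Icc 1 k, x ^ b * g (n - b) := by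
    intro n hn
    have hcard := jkW_card k j hk false n (by omega)
    rw [min_eq_left (by omega : k ≤ n)] at hcard
    simp only [Bool.not_false] at hcard
    calc h n = ∑ b ∈ Finset.Icc 1 k, ((jkW j k true (n - b)).ncard : ℝ) * x ^ n := by
          simp only [hhdef]
          rw [hcard]
          push_cast
          rw [Finset.sum_mul]
      _ = _ := by
          refine Finset.sum_congr rfl fun b hb => ?_
          rw [Finset.mem_Icc] at hb
          simp only [hgdef]
          rw [hxpow b n (by omega)]
          ring
  -- two-step recurrences
  have hgrec : ∀ n, j + k + 1 ≤ n →
      g n = ∑ a ∈ Finset.Icc 1 j, ∑ b ∈ Finset.Icc 1 k, x ^ (a + b) * g (n - (a + b)) := by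
    intro n hn
    rw [hg1 n (by omega)]
    refine Finset.sum_congr rfl fun a ha => ?_
    rw [Finset.mem_Icc] at ha
    rw [hh1 (n - a) (by omega), Finset.mul_sum]
    refine Finset.sum_congr rfl fun b hb => ?_
    rw [Finset.mem_Icc] at hb
    rw [show n - a - b = n - (a + b) by omega, pow_add]
    ring
  have hhrec : ∀ n, k + j + 1 ≤ n →
      h n = ∑ b ∈ Finset.Icc 1 k, ∑ a ∈ Finset.Icc 1 j, x ^ (b + a) * h (n - (b + a)) := by
    intro n hn
    rw [hh1 n (by omega)]
    refine Finset.sum_congr rfl fun b hb => ?_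
    rw [Finset.mem_Icc] at hb
    rw [hg1 (n - b) (by omega), Finset.mul_sum]
    refine Finset.sum_congr rfl fun a ha => ?_
    rw [Finset.mem_Icc] at ha
    rw [show n - b - a = n - (b + a) by omega, pow_add]
    ring
  -- positivity
  have hgpos : ∀ n, 0 < g n := by
    intro n
    simp only [hgdef]
    refine mul_pos ?_ (pow_pos hx n)
    have := (Set.ncard_pos (jkW_finite j k true n)).mpr (jkW_nonempty j k hj hk true n)
    exact_mod_cast this
  have hhpos : ∀ n, 0 < h n := by
    intro n
    simp only [hhdef]
    refine mul_pos ?_ (pow_pos hx n)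
    have := (Set.ncard_pos (jkW_finite k j false n)).mpr (jkW_nonempty k j hk hj false n)
    exact_mod_cast this
  obtain ⟨cg, Cg, hcg, hbg⟩ := renewal_bounds j k hj hk x hx hsol g hgpos hgrec
  obtain ⟨ch, Ch, hch, hbh⟩ :=
    renewal_bounds k j hk hj x hx (by rw [mul_comm]; exact hsol) h hhpos hhrec
  -- splitting N
  have hsplit : ∀ n, 1 ≤ n →
      (N n : ℝ) = ((jkW j k true n).ncard : ℝ) + ((jkW k j false n).ncard : ℝ) := by
    intro n hn
    rw [hN n]
    have hset : {t : List Bool | t.length = n ∧ ¬ (List.replicate (j + 1) true) <:+: t ∧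
        ¬ (List.replicate (k + 1) false) <:+: t} = jkW j k true n ∪ jkW k j false n := by
      ext l
      simp only [Set.mem_setOf_eq, Set.mem_union, jkW, Bool.not_true, Bool.not_false]
      constructor
      · rintro ⟨hlen, h1, h2⟩
        cases l with
        | nil => exfalso; simp only [List.length_nil] at hlen; omega
        | cons b l' =>
          cases b
          · exact Or.inr ⟨hlen, h2, h1, by simp⟩
          · exact Or.inl ⟨hlen, h1, h2, by simp⟩
      · rintro (⟨hlen, h1, h2, _⟩ | ⟨hlen, h2, h1, _⟩) <;> exact ⟨hlen, h1, h2⟩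
    rw [hset, Set.ncard_union_eq ?_ (jkW_finite _ _ _ _) (jkW_finite _ _ _ _)]
    · push_cast; ring
    · rw [Set.disjoint_left]
      rintro l ⟨hlen, -, -, hh1⟩ ⟨-, -, -, hh2⟩
      cases l with
      | nil => simp only [List.length_nil] at hlen; omega
      | cons b l' =>
        cases b
        · exact hh1 rfl
        · exact hh2 rfl
  have hNx : ∀ n, 1 ≤ n → (N n : ℝ) * x ^ n = g n + h n := by
    intro n hn
    rw [hsplit n hn]
    simp only [hgdef, hhdef]
    ring
  have hlow : ∀ n, 1 ≤ n → cg + ch ≤ (N n : ℝ) * x ^ n := by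
    intro n hn
    rw [hNx n hn]
    exact add_le_add (hbg n hn).1 (hbh n hn).1
  have hup : ∀ n, 1 ≤ n → (N n : ℝ) * x ^ n ≤ Cg + Ch := by
    intro n hn
    rw [hNx n hn]
    exact add_le_add (hbg n hn).2 (hbh n hn).2
  -- the set of convergence is exactly (s, ∞)
  have hmain : {σ : ℝ |
      Summable fun n : ℕ => (N (n + 1) : ℝ) * Real.exp (-((n : ℝ) + 1) * σ)} = Set.Ioi s := by
    ext σ
    simp only [Set.mem_setOf_eq, Set.mem_Ioi]
    constructor
    · intro hsum
      by_contra hle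
      push_neg at hle
      have hterm : ∀ n : ℕ, cg + ch ≤ (N (n + 1) : ℝ) * Real.exp (-((n : ℝ) + 1) * σ) := by
        intro n
        have h1 : Real.exp (-((n : ℝ) + 1) * σ)
            = x ^ (n + 1) * Real.exp (((n : ℝ) + 1) * (s - σ)) := by
          rw [hxdef, ← Real.exp_nat_mul, ← Real.exp_add]
          congr 1; push_cast; ring
        rw [h1, ← mul_assoc]
        have h2 := hlow (n + 1) (by omega)
        have h3 : (1 : ℝ) ≤ Real.exp (((n : ℝ) + 1) * (s - σ)) :=
          Real.one_le_exp (by nlinarith [Nat.cast_nonneg (α := ℝ) n])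
        calc cg + ch ≤ (N (n + 1) : ℝ) * x ^ (n + 1) := h2
          _ = (N (n + 1) : ℝ) * x ^ (n + 1) * 1 := by ring
          _ ≤ (N (n + 1) : ℝ) * x ^ (n + 1) * Real.exp (((n : ℝ) + 1) * (s - σ)) := by
              refine mul_le_mul_of_nonneg_left h3 ?_
              positivity
      have h0 : (0 : ℝ) < cg + ch := by linarith
      obtain ⟨n, hn⟩ := (hsum.tendsto_atTop_zero.eventually (gt_mem_nhds h0)).exists
      exact absurd (hterm n) (not_le.mpr hn)
    · intro hσ
      set r := Real.exp (s - σ) with hrdef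
      have hr0 : (0 : ℝ) ≤ r := le_of_lt (Real.exp_pos _)
      have hr1 : r < 1 := by rw [hrdef, Real.exp_lt_one_iff]; linarith
      refine Summable.of_nonneg_of_le (fun n => by positivity) ?_
        ((summable_geometric_of_lt_one hr0 hr1).mul_left ((Cg + Ch) * r))
      intro n
      have h1 : Real.exp (-((n : ℝ) + 1) * σ) = x ^ (n + 1) * r ^ (n + 1) := by
        rw [hxdef, hrdef, ← Real.exp_nat_mul, ← Real.exp_nat_mul, ← Real.exp_add]
        congr 1; push_cast; ring
      rw [h1, ← mul_assoc]
      calc (N (n + 1) : ℝ) * x ^ (n + 1) * r ^ (n + 1) ≤ (Cg + Ch) * r ^ (n + 1) := by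
            exact mul_le_mul_of_nonneg_right (hup (n + 1) (by omega)) (by positivity)
        _ = (Cg + Ch) * r * r ^ n := by rw [pow_succ]; ring
  rw [hmain]
  exact csInf_Ioi
end
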